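/- arXiv:1507.06193 — 8 statements merged into one kernel-verified Lean document; each statement's English description precedes it below -/
import Mathlib

section
/- Let d ≥ 1 and let X = (X_Q, X_P) : ℝ^d × ℝ^d → ℝ^d × ℝ^d be a continuously differentiable vector field satisfying the Hamiltonian integrability conditions. Define H : ℝ^d × ℝ^d → ℝ by H(q,p) = ∫₀¹ ( ⟨p, X_Q(λq, λp)⟩ − ⟨q, X_P(λq, λp)⟩ ) dλ. Then for all (q,p) ∈ ℝ^d × ℝ^d, the partial gradient of H with respect to p satisfies ∂H/∂p (q,p) = X_Q(q,p). -/
open Metric Set MeasureTheory intervalIntegral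

noncomputable section

/-- Partial derivative of a scalar function on `ℝ^d × ℝ^d` with respect to `q_k`. -/
def pdq (d : ℕ) (f : ((Fin d → ℝ) × (Fin d → ℝ)) → ℝ) (k : Fin d)
    (z : (Fin d → ℝ) × (Fin d → ℝ)) : ℝ :=
  fderiv ℝ f z ((Pi.single k 1 : Fin d → ℝ), 0)

/-- Partial derivative of a scalar function on `ℝ^d × ℝ^d` with respect to `p_k`. -/
def pdp (d : ℕ) (f : ((Fin d → ℝ) × (Fin d → ℝ)) → ℝ) (k : Fin d)
    (z : (Fin d → ℝ) × (Fin d → ℝ)) : ℝ :=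
  fderiv ℝ f z (0, (Pi.single k 1 : Fin d → ℝ))

/-- The Hamiltonian integrability conditions for a vector field
`X = (X_Q, X_P) : ℝ^d × ℝ^d → ℝ^d × ℝ^d`. -/
def HamIntegrability (d : ℕ)
    (XQ XP : ((Fin d → ℝ) × (Fin d → ℝ)) → (Fin d → ℝ)) : Prop :=
  ∀ z : (Fin d → ℝ) × (Fin d → ℝ), ∀ i k : Fin d,
    pdq d (fun w => XQ w i) k z + pdp d (fun w => XP w k) i z = 0 ∧
    pdp d (fun w => XQ w i) k z = pdp d (fun w => XQ w k) i z ∧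
    pdq d (fun w => XP w i) k z = pdq d (fun w => XP w k) i z

lemma vec_expand {d : ℕ} (v : (Fin d → ℝ) × (Fin d → ℝ)) :
    v = (∑ k, v.1 k • ((Pi.single k 1 : Fin d → ℝ), (0 : Fin d → ℝ)))
      + ∑ k, v.2 k • ((0 : Fin d → ℝ), (Pi.single k 1 : Fin d → ℝ)) := by
  apply Prod.ext <;>
  · funext j
    simp [Prod.fst_sum, Prod.snd_sum, Finset.sum_apply, Pi.single_apply, mul_ite,
      Finset.sum_ite_eq']

lemma fderiv_expand {d : ℕ} (φ : ((Fin d → ℝ) × (Fin d → ℝ)) → ℝ)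
    (w v : (Fin d → ℝ) × (Fin d → ℝ)) :
    fderiv ℝ φ w v = (∑ k, v.1 k * pdq d φ k w) + ∑ k, v.2 k * pdp d φ k w := by
  conv_lhs => rw [vec_expand v]
  rw [map_add, map_sum, map_sum]
  simp only [pdq, pdp]
  congr 1 <;> exact Finset.sum_congr rfl fun k _ => by rw [_root_.map_smul, smul_eq_mul]

/-- for a C¹ vector field satisfying the Hamiltonian integrability
conditions, the Hamiltonian `H(q,p) = ∫₀¹ (⟨p, X_Q(λq,λp)⟩ − ⟨q, X_P(λq,λp)⟩) dλ`
satisfies `∂H/∂p = X_Q`. -/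
theorem stmt2 (d : ℕ) (hd : 1 ≤ d)
    (XQ XP : ((Fin d → ℝ) × (Fin d → ℝ)) → (Fin d → ℝ))
    (hXQ : ContDiff ℝ 1 XQ) (hXP : ContDiff ℝ 1 XP)
    (hint : HamIntegrability d XQ XP)
    (H : ((Fin d → ℝ) × (Fin d → ℝ)) → ℝ)
    (hH : ∀ z : (Fin d → ℝ) × (Fin d → ℝ),
      H z = ∫ l in (0:ℝ)..1,
        ((∑ i, z.2 i * XQ (l • z.1, l • z.2) i) - ∑ i, z.1 i * XP (l • z.1, l • z.2) i)) :
    ∀ (z : (Fin d → ℝ) × (Fin d → ℝ)) (i : Fin d), pdp d H i z = XQ z i := by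
  intro z i
  have hXQk : ∀ k, ContDiff ℝ 1 (fun w => XQ w k) := fun k => by fun_prop
  have hXPk : ∀ k, ContDiff ℝ 1 (fun w => XP w k) := fun k => by fun_prop
  set G : ℝ × ((Fin d → ℝ) × (Fin d → ℝ)) → ℝ := fun w =>
      (∑ k, w.2.2 k * XQ (w.1 • w.2.1, w.1 • w.2.2) k)
        - ∑ k, w.2.1 k * XP (w.1 • w.2.1, w.1 • w.2.2) k with hGdef
  have hG : ContDiff ℝ 1 G := by
    apply ContDiff.sub <;> apply ContDiff.sum <;> intro k _ <;>
      apply ContDiff.mul <;> fun_prop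
  set Φ : ℝ × ((Fin d → ℝ) × (Fin d → ℝ)) → (((Fin d → ℝ) × (Fin d → ℝ)) →L[ℝ] ℝ) := fun w =>
      (fderiv ℝ G w).comp (ContinuousLinearMap.inr ℝ ℝ _) with hΦdef
  have hΦc : Continuous Φ :=
    (hG.continuous_fderiv one_ne_zero).clm_comp continuous_const
  have hdG : ∀ (t : ℝ) (x : (Fin d → ℝ) × (Fin d → ℝ)),
      HasFDerivAt (fun y => G (t, y)) (Φ (t, x)) x := by
    intro t x
    exact ((hG.differentiable one_ne_zero (t, x)).hasFDerivAt).comp x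
      (hasFDerivAt_prodMk_right t x)
  obtain ⟨C, hC⟩ := ((isCompact_Icc (a := (0:ℝ)) (b := 1)).prod
    (isCompact_closedBall z 1)).exists_bound_of_continuousOn hΦc.continuousOn
  have main : HasFDerivAt (fun x => ∫ t in (0:ℝ)..1, G (t, x))
      (∫ t in (0:ℝ)..1, Φ (t, z)) z := by
    apply intervalIntegral.hasFDerivAt_integral_of_dominated_of_fderiv_le
      (F' := fun x t => Φ (t, x)) (bound := fun _ => C) (s := ball z 1) (ball_mem_nhds z one_pos)
    · filter_upwards with x
      exact (hG.continuous.comp (continuous_id.prodMk continuous_const)).aestronglyMeasurable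
    · exact (hG.continuous.comp (continuous_id.prodMk continuous_const)).intervalIntegrable 0 1
    · exact (hΦc.comp (continuous_id.prodMk continuous_const)).aestronglyMeasurable
    · filter_upwards with t ht x hx
      rw [Set.uIoc_of_le (zero_le_one)] at ht
      exact hC (t, x) ⟨⟨le_of_lt ht.1, ht.2⟩, ball_subset_closedBall hx⟩
    · exact intervalIntegrable_const
    · filter_upwards with t _ x _
      exact hdG t x
  have hHeq : H = fun x => ∫ t in (0:ℝ)..1, G (t, x) := by
    funext x; rw [hH x]
  have hfd : HasFDerivAt H (∫ t in (0:ℝ)..1, Φ (t, z)) z := hHeq ▸ main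
  have hΦint : IntervalIntegrable (fun t => Φ (t, z)) MeasureTheory.volume 0 1 :=
    (hΦc.comp (continuous_id.prodMk continuous_const)).intervalIntegrable 0 1
  rw [pdp, hfd.fderiv, ContinuousLinearMap.intervalIntegral_apply hΦint]
  set e : Fin d → ℝ := Pi.single i 1 with he
  set φ : ((Fin d → ℝ) × (Fin d → ℝ)) → ℝ := fun w => XQ w i with hφdef
  have key : ∀ t : ℝ, Φ (t, z) ((0 : Fin d → ℝ), e) =
      XQ (t • z.1, t • z.2) i + t * (fderiv ℝ φ (t • z.1, t • z.2)) z := by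
    intro t
    have hterm1 : ∀ k : Fin d, HasFDerivAt
        (fun y : ((Fin d → ℝ) × (Fin d → ℝ)) => y.2 k * XQ (t • y.1, t • y.2) k)
        (z.2 k • ((fderiv ℝ (fun w => XQ w k) (t • z.1, t • z.2)).comp
            (t • ContinuousLinearMap.id ℝ ((Fin d → ℝ) × (Fin d → ℝ)))) +
          XQ (t • z.1, t • z.2) k •
            ((ContinuousLinearMap.proj k).comp
              (ContinuousLinearMap.snd ℝ (Fin d → ℝ) (Fin d → ℝ)))) z := by
      intro k
      have h1 : HasFDerivAt (fun y : ((Fin d → ℝ) × (Fin d → ℝ)) => y.2 k)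
          ((ContinuousLinearMap.proj k).comp
            (ContinuousLinearMap.snd ℝ (Fin d → ℝ) (Fin d → ℝ))) z :=
        ((ContinuousLinearMap.proj k).comp
          (ContinuousLinearMap.snd ℝ (Fin d → ℝ) (Fin d → ℝ))).hasFDerivAt
      have h2 : HasFDerivAt (fun y : ((Fin d → ℝ) × (Fin d → ℝ)) => XQ (t • y.1, t • y.2) k)
          ((fderiv ℝ (fun w => XQ w k) (t • z.1, t • z.2)).comp
            (t • ContinuousLinearMap.id ℝ ((Fin d → ℝ) × (Fin d → ℝ)))) z := by
        have hin : HasFDerivAt (fun y : ((Fin d → ℝ) × (Fin d → ℝ)) => (t • y.1, t • y.2))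
            (t • ContinuousLinearMap.id ℝ ((Fin d → ℝ) × (Fin d → ℝ))) z :=
          (t • ContinuousLinearMap.id ℝ ((Fin d → ℝ) × (Fin d → ℝ))).hasFDerivAt
        exact (((hXQk k).differentiable one_ne_zero _).hasFDerivAt).comp z hin
      exact h1.mul h2
    have hterm2 : ∀ k : Fin d, HasFDerivAt
        (fun y : ((Fin d → ℝ) × (Fin d → ℝ)) => y.1 k * XP (t • y.1, t • y.2) k)
        (z.1 k • ((fderiv ℝ (fun w => XP w k) (t • z.1, t • z.2)).comp
            (t • ContinuousLinearMap.id ℝ ((Fin d → ℝ) × (Fin d → ℝ)))) +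
          XP (t • z.1, t • z.2) k •
            ((ContinuousLinearMap.proj k).comp
              (ContinuousLinearMap.fst ℝ (Fin d → ℝ) (Fin d → ℝ)))) z := by
      intro k
      have h1 : HasFDerivAt (fun y : ((Fin d → ℝ) × (Fin d → ℝ)) => y.1 k)
          ((ContinuousLinearMap.proj k).comp
            (ContinuousLinearMap.fst ℝ (Fin d → ℝ) (Fin d → ℝ))) z :=
        ((ContinuousLinearMap.proj k).comp
          (ContinuousLinearMap.fst ℝ (Fin d → ℝ) (Fin d → ℝ))).hasFDerivAt
      have h2 : HasFDerivAt (fun y : ((Fin d → ℝ) × (Fin d → ℝ)) => XP (t • y.1, t • y.2) k)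
          ((fderiv ℝ (fun w => XP w k) (t • z.1, t • z.2)).comp
            (t • ContinuousLinearMap.id ℝ ((Fin d → ℝ) × (Fin d → ℝ)))) z := by
        have hin : HasFDerivAt (fun y : ((Fin d → ℝ) × (Fin d → ℝ)) => (t • y.1, t • y.2))
            (t • ContinuousLinearMap.id ℝ ((Fin d → ℝ) × (Fin d → ℝ))) z :=
          (t • ContinuousLinearMap.id ℝ ((Fin d → ℝ) × (Fin d → ℝ))).hasFDerivAt
        exact (((hXPk k).differentiable one_ne_zero _).hasFDerivAt).comp z hin
      exact h1.mul h2
    have hGt : HasFDerivAt (fun y => G (t, y))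
        ((∑ k, (z.2 k • ((fderiv ℝ (fun w => XQ w k) (t • z.1, t • z.2)).comp
            (t • ContinuousLinearMap.id ℝ ((Fin d → ℝ) × (Fin d → ℝ)))) +
          XQ (t • z.1, t • z.2) k •
            ((ContinuousLinearMap.proj k).comp
              (ContinuousLinearMap.snd ℝ (Fin d → ℝ) (Fin d → ℝ)))))
          - ∑ k, (z.1 k • ((fderiv ℝ (fun w => XP w k) (t • z.1, t • z.2)).comp
            (t • ContinuousLinearMap.id ℝ ((Fin d → ℝ) × (Fin d → ℝ)))) +
          XP (t • z.1, t • z.2) k •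
            ((ContinuousLinearMap.proj k).comp
              (ContinuousLinearMap.fst ℝ (Fin d → ℝ) (Fin d → ℝ))))) z :=
      HasFDerivAt.sub (HasFDerivAt.fun_sum fun k _ => hterm1 k) (HasFDerivAt.fun_sum fun k _ => hterm2 k)
    have hΦeq := (hdG t z).unique hGt
    rw [hΦeq]
    have heval : ∀ (A : ((Fin d → ℝ) × (Fin d → ℝ)) →L[ℝ] ℝ),
        (A.comp (t • ContinuousLinearMap.id ℝ ((Fin d → ℝ) × (Fin d → ℝ))))
          ((0 : Fin d → ℝ), e) = t * A ((0 : Fin d → ℝ), e) := by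
      intro A
      simp only [ContinuousLinearMap.comp_apply, ContinuousLinearMap.smul_apply,
        ContinuousLinearMap.id_apply, _root_.map_smul, smul_eq_mul]
    simp only [ContinuousLinearMap.sub_apply, ContinuousLinearMap.sum_apply,
      ContinuousLinearMap.add_apply, ContinuousLinearMap.smul_apply, heval,
      ContinuousLinearMap.comp_apply, ContinuousLinearMap.coe_snd',
      ContinuousLinearMap.coe_fst', ContinuousLinearMap.proj_apply, smul_eq_mul]
    have h1 : ∀ k : Fin d, (fderiv ℝ (fun w => XQ w k) (t • z.1, t • z.2)) ((0 : Fin d → ℝ), e)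
        = (fderiv ℝ (fun w => XQ w i) (t • z.1, t • z.2))
            ((0 : Fin d → ℝ), (Pi.single k 1 : Fin d → ℝ)) :=
      fun k => ((hint (t • z.1, t • z.2) i k).2.1).symm
    have h2 : ∀ k : Fin d, (fderiv ℝ (fun w => XP w k) (t • z.1, t • z.2)) ((0 : Fin d → ℝ), e)
        = -(fderiv ℝ (fun w => XQ w i) (t • z.1, t • z.2))
            (((Pi.single k 1 : Fin d → ℝ)), (0 : Fin d → ℝ)) := by
      intro k
      have h := (hint (t • z.1, t • z.2) i k).1
      simp only [pdq, pdp] at h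
      linarith
    simp only [h1, h2, Pi.zero_apply, mul_zero, add_zero, mul_neg, neg_neg]
    rw [fderiv_expand, Finset.sum_add_distrib]
    simp only [pdq, pdp, hφdef]
    rw [show (∑ x : Fin d, XQ (t • z.1, t • z.2) x * e x) = XQ (t • z.1, t • z.2) i from by
      simp [he, Pi.single_apply, mul_ite, Finset.sum_ite_eq', Finset.mem_univ]]
    have c1 : ∑ x : Fin d, z.2 x *
          (t * (fderiv ℝ (fun w => XQ w i) (t • z.1, t • z.2)) (0, Pi.single x 1))
        = t * ∑ x : Fin d, z.2 x *
            (fderiv ℝ (fun w => XQ w i) (t • z.1, t • z.2)) (0, Pi.single x 1) := by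
      rw [Finset.mul_sum]; exact Finset.sum_congr rfl fun x _ => by ring
    have c2 : ∑ x : Fin d, -(z.1 x *
          (t * (fderiv ℝ (fun w => XQ w i) (t • z.1, t • z.2)) (Pi.single x 1, 0)))
        = -(t * ∑ x : Fin d, z.1 x *
            (fderiv ℝ (fun w => XQ w i) (t • z.1, t • z.2)) (Pi.single x 1, 0)) := by
      rw [Finset.mul_sum, ← Finset.sum_neg_distrib]
      exact Finset.sum_congr rfl fun x _ => by ring
    rw [c1, c2]
    ring
  -- derivative of t ↦ t * φ (t • z)
  have hg : ∀ t : ℝ, HasDerivAt (fun s : ℝ => s * φ (s • z.1, s • z.2))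
      (XQ (t • z.1, t • z.2) i + t * fderiv ℝ φ (t • z.1, t • z.2) z) t := by
    intro t
    have hsm : HasDerivAt (fun s : ℝ => (s • z.1, s • z.2)) z t := by
      have := (hasDerivAt_id t).smul_const z
      simp only [id, one_smul] at this; exact this
    have h2 : HasDerivAt (fun s : ℝ => φ (s • z.1, s • z.2))
        (fderiv ℝ φ (t • z.1, t • z.2) z) t :=
      (((hXQk i).differentiable one_ne_zero _).hasFDerivAt).comp_hasDerivAt t hsm
    have := (hasDerivAt_id t).fun_mul h2
    simpa [add_comm] using this
  have hgc : Continuous (fun t : ℝ =>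
      XQ (t • z.1, t • z.2) i + t * fderiv ℝ φ (t • z.1, t • z.2) z) := by
    apply Continuous.add
    · exact ((hXQk i).continuous.comp (by fun_prop))
    · exact continuous_id.mul ((((hXQk i).continuous_fderiv one_ne_zero).comp
        (by fun_prop)).clm_apply continuous_const)
  have hsub := intervalIntegral.integral_eq_sub_of_hasDerivAt
    (f := fun s : ℝ => s * φ (s • z.1, s • z.2)) (a := 0) (b := 1)
    (fun t _ => hg t) (hgc.intervalIntegrable 0 1)
  rw [intervalIntegral.integral_congr (g := fun t : ℝ =>
      XQ (t • z.1, t • z.2) i + t * fderiv ℝ φ (t • z.1, t • z.2) z)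
    (fun t _ => key t), hsub]
  simp [hφdef]
end
end

section
/- Let d ≥ 1 and n ≥ 1. Let X_{Q,S}, X_{P,S} : ℝ^d × ℝ^d → ℝ^{d×n} be continuously differentiable matrix-valued maps. Then the following are equivalent: (a) for all (q,p), all i,k ∈ {1,…,d} and all j ∈ {1,…,n}: ∂(X_{Q,S})_{ij}/∂q_k + ∂(X_{P,S})_{kj}/∂p_i = 0, ∂(X_{Q,S})_{ij}/∂p_k = ∂(X_{Q,S})_{kj}/∂p_i, and ∂(X_{P,S})_{ij}/∂q_k = ∂(X_{P,S})_{kj}/∂q_i; (b) there exists a twice continuously differentiable map H_S : ℝ^d × ℝ^d → ℝ^n such that for all i,j: (X_{Q,S})_{ij} = ∂(H_S)_j/∂p_i and (X_{P,S})_{ij} = −∂(H_S)_j/∂q_i. Moreover, in the affirmative case one may take (H_S)_j(q,p) = ∫₀¹ ( Σ_i p_i (X_{Q,S})_{ij}(λq, λp) − Σ_i q_i (X_{P,S})_{ij}(λq, λp) ) dλ. -/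
set_option maxHeartbeats 1000000


noncomputable section

/-- The stochastic integrability conditions for the purely stochastic part, for
matrix-valued maps `X_{Q,S}, X_{P,S} : ℝ^d × ℝ^d → ℝ^{d×n}`. -/
def StochIntegrability (d n : ℕ)
    (XQS XPS : ((Fin d → ℝ) × (Fin d → ℝ)) → Fin d → Fin n → ℝ) : Prop :=
  ∀ z : (Fin d → ℝ) × (Fin d → ℝ), ∀ i k : Fin d, ∀ j : Fin n,
    pdq d (fun w => XQS w i j) k z + pdp d (fun w => XPS w k j) i z = 0 ∧
    pdp d (fun w => XQS w i j) k z = pdp d (fun w => XQS w k j) i z ∧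
    pdq d (fun w => XPS w i j) k z = pdq d (fun w => XPS w k j) i z

/-- The candidate stochastic Hamiltonian
`(H_S)_j(q,p) = ∫₀¹ (Σ_i p_i (X_{Q,S})_{ij}(λq,λp) − Σ_i q_i (X_{P,S})_{ij}(λq,λp)) dλ`. -/
def candidateHS (d n : ℕ)
    (XQS XPS : ((Fin d → ℝ) × (Fin d → ℝ)) → Fin d → Fin n → ℝ)
    (z : (Fin d → ℝ) × (Fin d → ℝ)) : Fin n → ℝ := fun j =>
  ∫ l in (0:ℝ)..1,
    ((∑ i, z.2 i * XQS (l • z.1, l • z.2) i j) - ∑ i, z.1 i * XPS (l • z.1, l • z.2) i j)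

namespace Stmt4Aux

open intervalIntegral MeasureTheory Metric

variable {d n : ℕ}

abbrev E (d : ℕ) := (Fin d → ℝ) × (Fin d → ℝ)

/-- The 1-form associated to the `j`-th column. -/
def Fmat (XQS XPS : E d → Fin d → Fin n → ℝ) (j : Fin n) (z : E d) :
    E d →L[ℝ] ℝ :=
  ∑ i, XQS z i j • ((ContinuousLinearMap.proj i).comp
      (ContinuousLinearMap.snd ℝ (Fin d → ℝ) (Fin d → ℝ))) -
  ∑ i, XPS z i j • ((ContinuousLinearMap.proj i).comp
      (ContinuousLinearMap.fst ℝ (Fin d → ℝ) (Fin d → ℝ)))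

lemma Fmat_apply (XQS XPS : E d → Fin d → Fin n → ℝ) (j : Fin n) (z v : E d) :
    Fmat XQS XPS j z v = ∑ i, XQS z i j * v.2 i - ∑ i, XPS z i j * v.1 i := by
  simp [Fmat, ContinuousLinearMap.sum_apply, smul_eq_mul]

lemma contDiff_coord {X : E d → Fin d → Fin n → ℝ} (hX : ContDiff ℝ 1 X)
    (i : Fin d) (j : Fin n) : ContDiff ℝ 1 (fun z => X z i j) :=
  contDiff_pi.mp (contDiff_pi.mp hX i) j

lemma contDiff_Fmat {XQS XPS : E d → Fin d → Fin n → ℝ}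
    (hXQS : ContDiff ℝ 1 XQS) (hXPS : ContDiff ℝ 1 XPS) (j : Fin n) :
    ContDiff ℝ 1 (Fmat XQS XPS j) := by
  apply ContDiff.sub <;> apply ContDiff.sum <;> intro i _
  · exact (contDiff_coord hXQS i j).smul contDiff_const
  · exact (contDiff_coord hXPS i j).smul contDiff_const

lemma sum_single (u : Fin d → ℝ) :
    ∑ k, u k • (Pi.single k 1 : Fin d → ℝ) = u := by
  funext x
  simp [Finset.sum_apply, Pi.single_apply]

lemma Dapply (f : E d → ℝ) (z : E d) (hf : DifferentiableAt ℝ f z) (v : E d) :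
    fderiv ℝ f z v = ∑ k, v.1 k * pdq d f k z + ∑ k, v.2 k * pdp d f k z := by
  have hv : v = (∑ k, v.1 k • (((Pi.single k 1 : Fin d → ℝ), (0 : Fin d → ℝ)) : E d)) +
      ∑ k, v.2 k • (((0 : Fin d → ℝ), (Pi.single k 1 : Fin d → ℝ)) : E d) := by
    apply Prod.ext
    · simp [Prod.fst_sum, sum_single]
    · simp [Prod.snd_sum, sum_single]
  conv_lhs => rw [hv]
  rw [map_add, map_sum, map_sum]
  simp only [_root_.map_smul, smul_eq_mul, pdq, pdp]

lemma fderiv_Fmat_apply {XQS XPS : E d → Fin d → Fin n → ℝ}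
    (hXQS : ContDiff ℝ 1 XQS) (hXPS : ContDiff ℝ 1 XPS) (j : Fin n) (z v w : E d) :
    fderiv ℝ (Fmat XQS XPS j) z v w =
      ∑ i, w.2 i * fderiv ℝ (fun y => XQS y i j) z v -
      ∑ i, w.1 i * fderiv ℝ (fun y => XPS y i j) z v := by
  have hFd : DifferentiableAt ℝ (Fmat XQS XPS j) z :=
    ((contDiff_Fmat hXQS hXPS j).differentiable one_ne_zero) z
  have h1 : fderiv ℝ (fun y => Fmat XQS XPS j y w) z v = fderiv ℝ (Fmat XQS XPS j) z v w := by
    rw [fderiv_clm_apply hFd (differentiableAt_const w)]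
    simp
  rw [← h1]
  have h2 : (fun y => Fmat XQS XPS j y w) =
      fun y => (∑ i, XQS y i j * w.2 i) - ∑ i, XPS y i j * w.1 i := by
    funext y; rw [Fmat_apply]
  rw [h2]
  have hQd : ∀ i : Fin d, DifferentiableAt ℝ (fun y => XQS y i j) z :=
    fun i => ((contDiff_coord hXQS i j).differentiable one_ne_zero) z
  have hPd : ∀ i : Fin d, DifferentiableAt ℝ (fun y => XPS y i j) z :=
    fun i => ((contDiff_coord hXPS i j).differentiable one_ne_zero) z
  have hQ : ∀ i : Fin d, HasFDerivAt (fun y => XQS y i j * w.2 i)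
      (w.2 i • fderiv ℝ (fun y => XQS y i j) z) z :=
    fun i => (hQd i).hasFDerivAt.mul_const (w.2 i)
  have hP : ∀ i : Fin d, HasFDerivAt (fun y => XPS y i j * w.1 i)
      (w.1 i • fderiv ℝ (fun y => XPS y i j) z) z :=
    fun i => (hPd i).hasFDerivAt.mul_const (w.1 i)
  have hsum : HasFDerivAt (fun y => (∑ i, XQS y i j * w.2 i) - ∑ i, XPS y i j * w.1 i)
      ((∑ i, w.2 i • fderiv ℝ (fun y => XQS y i j) z) -
       ∑ i, w.1 i • fderiv ℝ (fun y => XPS y i j) z) z := by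
    exact (HasFDerivAt.fun_sum (fun i _ => hQ i)).fun_sub (HasFDerivAt.fun_sum (fun i _ => hP i))
  rw [hsum.fderiv]
  simp [ContinuousLinearMap.sum_apply, smul_eq_mul]


lemma symm_Fmat {XQS XPS : E d → Fin d → Fin n → ℝ}
    (hXQS : ContDiff ℝ 1 XQS) (hXPS : ContDiff ℝ 1 XPS) (j : Fin n)
    (hint : StochIntegrability d n XQS XPS) (z v w : E d) :
    fderiv ℝ (Fmat XQS XPS j) z v w = fderiv ℝ (Fmat XQS XPS j) z w v := by
  rw [fderiv_Fmat_apply hXQS hXPS, fderiv_Fmat_apply hXQS hXPS]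
  have hQ : ∀ (i : Fin d) (u : E d), fderiv ℝ (fun y => XQS y i j) z u =
      ∑ k, u.1 k * pdq d (fun y => XQS y i j) k z +
      ∑ k, u.2 k * pdp d (fun y => XQS y i j) k z :=
    fun i u => Dapply _ z (((contDiff_coord hXQS i j).differentiable one_ne_zero) z) u
  have hP : ∀ (i : Fin d) (u : E d), fderiv ℝ (fun y => XPS y i j) z u =
      ∑ k, u.1 k * pdq d (fun y => XPS y i j) k z +
      ∑ k, u.2 k * pdp d (fun y => XPS y i j) k z :=
    fun i u => Dapply _ z (((contDiff_coord hXPS i j).differentiable one_ne_zero) z) u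
  simp only [hQ, hP, mul_add, Finset.mul_sum, Finset.sum_add_distrib]
  have hS1 : (∑ i, ∑ k, w.2 i * (v.1 k * pdq d (fun y => XQS y i j) k z)) =
      -∑ i, ∑ k, v.1 i * (w.2 k * pdp d (fun y => XPS y i j) k z) := by
    rw [Finset.sum_comm, ← Finset.sum_neg_distrib]
    refine Finset.sum_congr rfl fun a _ => ?_
    rw [← Finset.sum_neg_distrib]
    refine Finset.sum_congr rfl fun b _ => ?_
    linear_combination (w.2 b * v.1 a) * (hint z b a j).1
  have hT1 : (∑ i, ∑ k, v.2 i * (w.1 k * pdq d (fun y => XQS y i j) k z)) =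
      -∑ i, ∑ k, w.1 i * (v.2 k * pdp d (fun y => XPS y i j) k z) := by
    rw [Finset.sum_comm, ← Finset.sum_neg_distrib]
    refine Finset.sum_congr rfl fun a _ => ?_
    rw [← Finset.sum_neg_distrib]
    refine Finset.sum_congr rfl fun b _ => ?_
    linear_combination (v.2 b * w.1 a) * (hint z b a j).1
  have hS2 : (∑ i, ∑ k, w.2 i * (v.2 k * pdp d (fun y => XQS y i j) k z)) =
      ∑ i, ∑ k, v.2 i * (w.2 k * pdp d (fun y => XQS y i j) k z) := by
    rw [Finset.sum_comm]
    refine Finset.sum_congr rfl fun a _ => Finset.sum_congr rfl fun b _ => ?_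
    linear_combination (w.2 b * v.2 a) * (hint z b a j).2.1
  have hS3 : (∑ i, ∑ k, w.1 i * (v.1 k * pdq d (fun y => XPS y i j) k z)) =
      ∑ i, ∑ k, v.1 i * (w.1 k * pdq d (fun y => XPS y i j) k z) := by
    rw [Finset.sum_comm]
    refine Finset.sum_congr rfl fun a _ => Finset.sum_congr rfl fun b _ => ?_
    linear_combination (w.1 b * v.1 a) * (hint z b a j).2.2
  linear_combination hS1 + hS2 - hS3 - hT1


theorem poincare_hasFDerivAt' {EE : Type*} [NormedAddCommGroup EE] [NormedSpace ℝ EE]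
    [FiniteDimensional ℝ EE]
    (F : EE → EE →L[ℝ] ℝ) (hF : ContDiff ℝ 1 F)
    (hsymm : ∀ z v w, fderiv ℝ F z v w = fderiv ℝ F z w v) (x₀ : EE) :
    HasFDerivAt (fun x => ∫ l in (0:ℝ)..1, F (l • x) x) (F x₀) x₀ := by
  have hFd : Differentiable ℝ F := hF.differentiable one_ne_zero
  have hFc : Continuous F := hF.continuous
  have hF'c : Continuous (fderiv ℝ F) := hF.continuous_fderiv one_ne_zero
  set R : ℝ := ‖x₀‖ + 1 with hR
  obtain ⟨C₀, hC₀⟩ := (isCompact_closedBall (0:EE) R).exists_bound_of_continuousOn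
    hFc.continuousOn
  obtain ⟨C₁, hC₁⟩ := (isCompact_closedBall (0:EE) R).exists_bound_of_continuousOn
    (E := EE →L[ℝ] EE →L[ℝ] ℝ) (f := fderiv ℝ F) hF'c.continuousOn
  set G' : EE → ℝ → EE →L[ℝ] ℝ := fun x l =>
    (F (l • x)).comp (ContinuousLinearMap.id ℝ EE) +
      ((fderiv ℝ F (l • x)).comp (l • ContinuousLinearMap.id ℝ EE)).flip x with hG'
  have hG'cont : ∀ x : EE, Continuous (G' x) := by
    intro x
    have h1 : Continuous fun l : ℝ => F (l • x) :=
      hFc.comp (continuous_id.smul continuous_const)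
    have h2 : Continuous fun l : ℝ => fderiv ℝ F (l • x) :=
      hF'c.comp (continuous_id.smul continuous_const)
    have h3 : Continuous fun l : ℝ => l • ContinuousLinearMap.id ℝ EE :=
      continuous_id.smul continuous_const
    have h5 : Continuous fun l : ℝ => ((fderiv ℝ F (l • x)).comp
        (l • ContinuousLinearMap.id ℝ EE)).flip :=
      (ContinuousLinearMap.flipₗᵢ ℝ EE EE ℝ).continuous.comp (h2.clm_comp h3)
    exact ((h1.clm_comp continuous_const).add (h5.clm_apply continuous_const))
  have h_diff : ∀ l : ℝ, ∀ x : EE, HasFDerivAt (fun x => (F (l • x)) x) (G' x l) x := by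
    intro l x
    have h1 : HasFDerivAt (fun x : EE => l • x) (l • ContinuousLinearMap.id ℝ EE) x :=
      (hasFDerivAt_id x).const_smul l
    have h2 : HasFDerivAt (fun x => F (l • x))
        ((fderiv ℝ F (l • x)).comp (l • ContinuousLinearMap.id ℝ EE)) x :=
      ((hFd (l • x)).hasFDerivAt).comp x h1
    exact h2.clm_apply (hasFDerivAt_id x)
  set C : ℝ := (max C₀ 0) + (max C₁ 0) * R with hC
  have hmain := intervalIntegral.hasFDerivAt_integral_of_dominated_of_fderiv_le
    (μ := volume) (F := fun x l => (F (l • x)) x) (F' := G') (x₀ := x₀)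
    (a := 0) (b := 1) (bound := fun _ => C) (s := ball x₀ 1) (ball_mem_nhds x₀ one_pos)
    (by
      filter_upwards with x
      exact ((hFc.comp (continuous_id.smul continuous_const)).clm_apply
        continuous_const).aestronglyMeasurable.restrict)
    (((hFc.comp (continuous_id.smul continuous_const)).clm_apply
        continuous_const).intervalIntegrable 0 1)
    ((hG'cont x₀).aestronglyMeasurable.restrict)
    (by
      filter_upwards with l hl x hx
      have hl' : l ∈ Set.Ioc (0:ℝ) 1 := by rwa [Set.uIoc_of_le zero_le_one] at hl
      have hlabs : ‖l‖ ≤ 1 := by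
        rw [Real.norm_eq_abs, abs_of_pos hl'.1]; exact hl'.2
      have hxR : ‖x‖ ≤ R := by
        have h := mem_ball_iff_norm.mp hx
        have : ‖x‖ ≤ ‖x₀‖ + ‖x - x₀‖ := by
          calc ‖x‖ = ‖x₀ + (x - x₀)‖ := by congr 1; abel
            _ ≤ ‖x₀‖ + ‖x - x₀‖ := norm_add_le _ _
        linarith
      have hlx : l • x ∈ closedBall (0:EE) R := by
        rw [mem_closedBall_zero_iff]
        refine (norm_smul_le l x).trans ?_
        have hR0 : (0:ℝ) ≤ R := by positivity
        nlinarith [norm_nonneg x, norm_nonneg l]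
      have hb1 : ‖F (l • x)‖ ≤ max C₀ 0 := le_max_of_le_left (hC₀ _ hlx)
      have hb2 : ‖fderiv ℝ F (l • x)‖ ≤ max C₁ 0 := le_max_of_le_left (hC₁ _ hlx)
      have hsm : ‖l • ContinuousLinearMap.id ℝ EE‖ ≤ 1 := by
        refine (norm_smul_le l (ContinuousLinearMap.id ℝ EE)).trans ?_
        have := ContinuousLinearMap.norm_id_le (E := EE) (𝕜 := ℝ)
        nlinarith [norm_nonneg l, norm_nonneg (ContinuousLinearMap.id ℝ EE)]
      have key : ‖G' x l‖ ≤ ‖F (l • x)‖ + ‖fderiv ℝ F (l • x)‖ * ‖x‖ := by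
        refine (norm_add_le _ _).trans ?_
        rw [ContinuousLinearMap.comp_id]
        gcongr
        calc ‖((fderiv ℝ F (l • x)).comp (l • ContinuousLinearMap.id ℝ EE)).flip x‖
            ≤ ‖((fderiv ℝ F (l • x)).comp (l • ContinuousLinearMap.id ℝ EE)).flip‖ * ‖x‖ :=
              ContinuousLinearMap.le_opNorm _ _
          _ = ‖(fderiv ℝ F (l • x)).comp (l • ContinuousLinearMap.id ℝ EE)‖ * ‖x‖ := by
              rw [ContinuousLinearMap.opNorm_flip]
          _ ≤ (‖fderiv ℝ F (l • x)‖ * ‖l • ContinuousLinearMap.id ℝ EE‖) * ‖x‖ := by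
              gcongr; exact ContinuousLinearMap.opNorm_comp_le _ _
          _ ≤ ‖fderiv ℝ F (l • x)‖ * 1 * ‖x‖ := by gcongr
          _ = ‖fderiv ℝ F (l • x)‖ * ‖x‖ := by ring
      refine key.trans ?_
      have h0 : (0:ℝ) ≤ max C₁ 0 := le_max_right _ _
      have hx0 : (0:ℝ) ≤ ‖x‖ := norm_nonneg x
      nlinarith [norm_nonneg (fderiv ℝ F (l • x))])
    (intervalIntegrable_const)
    (by
      filter_upwards with l hl x hx
      exact h_diff l x)
  have key : ∀ l : ℝ, HasDerivAt (fun l : ℝ => l • F (l • x₀)) (G' x₀ l) l := by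
    intro l
    have h1 : HasDerivAt (fun l : ℝ => l • x₀) x₀ l := by
      simpa using (hasDerivAt_id l).smul_const x₀
    have h2 : HasDerivAt (fun l : ℝ => F (l • x₀)) (fderiv ℝ F (l • x₀) x₀) l :=
      (hFd (l • x₀)).hasFDerivAt.comp_hasDerivAt l h1
    have h3 := (hasDerivAt_id l).smul h2
    convert h3 using 1
    · rfl
    · rfl
    · rfl
    · rfl
    ext w
    have hs := hsymm (l • x₀) w x₀
    simp only [hG', ContinuousLinearMap.add_apply, ContinuousLinearMap.coe_comp',
      Function.comp_apply, ContinuousLinearMap.coe_id', id_eq,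
      ContinuousLinearMap.flip_apply, ContinuousLinearMap.smul_apply,
      ContinuousLinearMap.map_smul, ContinuousLinearMap.coe_smul', Pi.smul_apply,
      smul_eq_mul]
    rw [hs]
    ring
  have hint : IntervalIntegrable (G' x₀) volume 0 1 :=
    (hG'cont x₀).intervalIntegrable 0 1
  have hcalc : (∫ l in (0:ℝ)..1, G' x₀ l) = F x₀ := by
    rw [intervalIntegral.integral_eq_sub_of_hasDerivAt (fun l _ => key l) hint]
    simp
  rwa [hcalc] at hmain


variable {d n : ℕ}

lemma hasFDerivAt_candidate {XQS XPS : E d → Fin d → Fin n → ℝ}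
    (hXQS : ContDiff ℝ 1 XQS) (hXPS : ContDiff ℝ 1 XPS)
    (hint : StochIntegrability d n XQS XPS) (j : Fin n) (z : E d) :
    HasFDerivAt (fun x => candidateHS d n XQS XPS x j) (Fmat XQS XPS j z) z := by
  have hpo := poincare_hasFDerivAt' (Fmat XQS XPS j) (contDiff_Fmat hXQS hXPS j)
    (symm_Fmat hXQS hXPS j hint) z
  have heq : (fun x => candidateHS d n XQS XPS x j) =
      fun x => ∫ l in (0:ℝ)..1, Fmat XQS XPS j (l • x) x := by
    funext x
    unfold candidateHS
    refine intervalIntegral.integral_congr fun l _ => ?_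
    rw [Fmat_apply]
    have hlz : ((l • x.1, l • x.2) : E d) = l • x := by
      ext <;> simp
    rw [hlz]
    congr 1 <;> exact Finset.sum_congr rfl fun i _ => mul_comm _ _
  rw [heq]
  exact hpo

lemma Fmat_single_p {XQS XPS : E d → Fin d → Fin n → ℝ} (j : Fin n) (z : E d) (i : Fin d) :
    Fmat XQS XPS j z ((0 : Fin d → ℝ), (Pi.single i 1 : Fin d → ℝ)) = XQS z i j := by
  rw [Fmat_apply]
  simp [Pi.single_apply, Finset.sum_ite_eq']

lemma Fmat_single_q {XQS XPS : E d → Fin d → Fin n → ℝ} (j : Fin n) (z : E d) (i : Fin d) :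
    Fmat XQS XPS j z ((Pi.single i 1 : Fin d → ℝ), (0 : Fin d → ℝ)) = -XPS z i j := by
  rw [Fmat_apply]
  simp [Pi.single_apply, Finset.sum_ite_eq']

theorem direct {XQS XPS : E d → Fin d → Fin n → ℝ}
    (hXQS : ContDiff ℝ 1 XQS) (hXPS : ContDiff ℝ 1 XPS)
    (hint : StochIntegrability d n XQS XPS) :
    ContDiff ℝ 2 (candidateHS d n XQS XPS) ∧
      ∀ (z : E d) (i : Fin d) (j : Fin n),
        XQS z i j = pdp d (fun w => candidateHS d n XQS XPS w j) i z ∧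
        XPS z i j = - pdq d (fun w => candidateHS d n XQS XPS w j) i z := by
  constructor
  · rw [contDiff_pi]
    intro j
    rw [show (2 : WithTop ℕ∞) = 1 + 1 from by norm_num, contDiff_succ_iff_fderiv]
    refine ⟨fun z => (hasFDerivAt_candidate hXQS hXPS hint j z).differentiableAt,
      by intro h; simp at h, ?_⟩
    have hfd : fderiv ℝ (fun z => candidateHS d n XQS XPS z j) = Fmat XQS XPS j :=
      funext fun z => (hasFDerivAt_candidate hXQS hXPS hint j z).fderiv
    rw [hfd]
    exact contDiff_Fmat hXQS hXPS j
  · intro z i j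
    have hf := (hasFDerivAt_candidate hXQS hXPS hint j z).fderiv
    constructor
    · simp only [pdp]
      rw [hf, Fmat_single_p]
    · simp only [pdq]
      rw [hf, Fmat_single_q, neg_neg]

theorem converse {XQS XPS : E d → Fin d → Fin n → ℝ} {HS : E d → Fin n → ℝ}
    (hHS2 : ContDiff ℝ 2 HS)
    (hrel : ∀ (z : E d) (i : Fin d) (j : Fin n),
      XQS z i j = pdp d (fun w => HS w j) i z ∧
      XPS z i j = - pdq d (fun w => HS w j) i z) :
    StochIntegrability d n XQS XPS := by
  intro z i k j
  have hh2 : ContDiff ℝ 2 (fun w => HS w j) := contDiff_pi.mp hHS2 j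
  have hh2' : ContDiff ℝ (1 + 1) (fun w => HS w j) := by
    rwa [show ((1 : WithTop ℕ∞) + 1) = 2 from by norm_num]
  have hh1 : ContDiff ℝ 1 (fderiv ℝ (fun w => HS w j)) :=
    (contDiff_succ_iff_fderiv.mp hh2').2.2
  have hdiffh : Differentiable ℝ (fun w => HS w j) := hh2.differentiable (by norm_num)
  have hsymm := second_derivative_symmetric (f := fun w => HS w j)
    (f' := fderiv ℝ (fun w => HS w j)) (f'' := fderiv ℝ (fderiv ℝ (fun w => HS w j)) z)
    (fun y => (hdiffh y).hasFDerivAt) ((hh1.differentiable one_ne_zero z).hasFDerivAt)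
  have hps : ∀ (u v : E d),
      fderiv ℝ (fun w => fderiv ℝ (fun w' => HS w' j) w u) z v =
        fderiv ℝ (fderiv ℝ (fun w => HS w j)) z v u := by
    intro u v
    rw [fderiv_clm_apply (hh1.differentiable one_ne_zero z) (differentiableAt_const u)]
    simp
  have hQ : ∀ i' : Fin d, (fun w => XQS w i' j) =
      fun w => fderiv ℝ (fun w' => HS w' j) w ((0 : Fin d → ℝ), Pi.single i' 1) := by
    intro i'; funext w; rw [(hrel w i' j).1]; rfl
  have hP : ∀ i' : Fin d, (fun w => XPS w i' j) =
      fun w => -(fderiv ℝ (fun w' => HS w' j) w (Pi.single i' 1, (0 : Fin d → ℝ))) := by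
    intro i'; funext w; rw [(hrel w i' j).2]; rfl
  refine ⟨?_, ?_, ?_⟩
  · rw [hQ i, hP k]
    simp only [pdq, pdp]
    rw [fderiv_fun_neg]
    simp only [ContinuousLinearMap.neg_apply]
    rw [hps, hps]
    linear_combination hsymm (Pi.single k 1, (0 : Fin d → ℝ)) ((0 : Fin d → ℝ), Pi.single i 1)
  · rw [hQ i, hQ k]
    simp only [pdp]
    rw [hps, hps]
    exact hsymm _ _
  · rw [hP i, hP k]
    simp only [pdq]
    rw [fderiv_fun_neg, fderiv_fun_neg]
    simp only [ContinuousLinearMap.neg_apply]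
    rw [hps, hps]
    linear_combination -hsymm (Pi.single k 1, (0 : Fin d → ℝ)) (Pi.single i 1, (0 : Fin d → ℝ))

end Stmt4Aux

/-- the stochastic integrability conditions for the purely
stochastic part hold iff the diffusion coefficients derive from a C² potential
`H_S : ℝ^d × ℝ^d → ℝ^n`; in the affirmative case one may take the explicit
candidate. -/
theorem stmt4 (d n : ℕ) (hd : 1 ≤ d) (hn : 1 ≤ n)
    (XQS XPS : ((Fin d → ℝ) × (Fin d → ℝ)) → Fin d → Fin n → ℝ)
    (hXQS : ContDiff ℝ 1 XQS) (hXPS : ContDiff ℝ 1 XPS) :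
    (StochIntegrability d n XQS XPS ↔
      ∃ HS : ((Fin d → ℝ) × (Fin d → ℝ)) → Fin n → ℝ, ContDiff ℝ 2 HS ∧
        ∀ (z : (Fin d → ℝ) × (Fin d → ℝ)) (i : Fin d) (j : Fin n),
          XQS z i j = pdp d (fun w => HS w j) i z ∧
          XPS z i j = - pdq d (fun w => HS w j) i z) ∧
    (StochIntegrability d n XQS XPS →
      (ContDiff ℝ 2 (candidateHS d n XQS XPS) ∧
        ∀ (z : (Fin d → ℝ) × (Fin d → ℝ)) (i : Fin d) (j : Fin n),
          XQS z i j = pdp d (fun w => candidateHS d n XQS XPS w j) i z ∧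
          XPS z i j = - pdq d (fun w => candidateHS d n XQS XPS w j) i z)) := by
  refine ⟨⟨fun hint => ⟨candidateHS d n XQS XPS,
      (Stmt4Aux.direct hXQS hXPS hint).1, (Stmt4Aux.direct hXQS hXPS hint).2⟩, ?_⟩,
    fun hint => Stmt4Aux.direct hXQS hXPS hint⟩
  rintro ⟨HS, hHS2, hrel⟩
  exact Stmt4Aux.converse hHS2 hrel
end
end

section
/- Let d ≥ 1, n ≥ 1, and let X_{Q,S}, X_{P,S} : ℝ^d × ℝ^d → ℝ^{d×n} be continuously differentiable maps satisfying: for all (q,p), all i,k ∈ {1,…,d} and all j ∈ {1,…,n}, ∂(X_{Q,S})_{ij}/∂q_k + ∂(X_{P,S})_{kj}/∂p_i = 0, ∂(X_{Q,S})_{ij}/∂p_k = ∂(X_{Q,S})_{kj}/∂p_i, and ∂(X_{P,S})_{ij}/∂q_k = ∂(X_{P,S})_{kj}/∂q_i. Define H_S : ℝ^d × ℝ^d → ℝ^n componentwise by (H_S)_j(q,p) = ∫₀¹ ( Σ_i p_i (X_{Q,S})_{ij}(λq, λp) − Σ_i q_i (X_{P,S})_{ij}(λq, λp) ) dλ. Then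 for all (q,p), all i ∈ {1,…,d} and all j ∈ {1,…,n}: ∂(H_S)_j/∂q_i (q,p) = −(X_{P,S})_{ij}(q,p) and ∂(H_S)_j/∂p_i (q,p) = (X_{Q,S})_{ij}(q,p). -/
noncomputable section

open MeasureTheory

private lemma vec_split (v : (Fin d → ℝ) × (Fin d → ℝ)) :
    v = (∑ m, v.1 m • ((Pi.single m 1 : Fin d → ℝ), (0 : Fin d → ℝ)))
        + ∑ m, v.2 m • ((0 : Fin d → ℝ), (Pi.single m 1 : Fin d → ℝ)) := by
  ext x <;>
    simp [Prod.fst_sum, Prod.snd_sum, Finset.sum_apply, Pi.single_apply]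

private lemma dir_decomp (g : (Fin d → ℝ) × (Fin d → ℝ) → ℝ)
    (w v : (Fin d → ℝ) × (Fin d → ℝ)) :
    fderiv ℝ g w v = (∑ m, v.1 m * pdq d g m w) + ∑ m, v.2 m * pdp d g m w := by
  conv_lhs => rw [vec_split v]
  rw [map_add, map_sum, map_sum]
  simp only [_root_.map_smul, smul_eq_mul, pdq, pdp]

private lemma comp_contDiff {X : (Fin d → ℝ) × (Fin d → ℝ) → Fin d → Fin n → ℝ}
    (hX : ContDiff ℝ 1 X) (m : Fin d) (j : Fin n) :
    ContDiff ℝ 1 (fun v => X v m j) :=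
  (ContinuousLinearMap.proj j : (Fin n → ℝ) →L[ℝ] ℝ).contDiff.comp
    ((ContinuousLinearMap.proj m : (Fin d → Fin n → ℝ) →L[ℝ] (Fin n → ℝ)).contDiff.comp hX)

private lemma hasDerivAt_line (g : (Fin d → ℝ) × (Fin d → ℝ) → ℝ) (hg : ContDiff ℝ 1 g)
    (z : (Fin d → ℝ) × (Fin d → ℝ)) (t : ℝ) :
    HasDerivAt (fun s : ℝ => g (s • z.1, s • z.2)) (fderiv ℝ g (t • z.1, t • z.2) z) t := by
  have h1 : HasDerivAt (fun s : ℝ => (s • z : (Fin d → ℝ) × (Fin d → ℝ))) z t := by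
    simpa using (hasDerivAt_id t).smul_const z
  exact ((hg.differentiable one_ne_zero (t • z)).hasFDerivAt).comp_hasDerivAt t h1

private def Dmap (XQS XPS : ((Fin d → ℝ) × (Fin d → ℝ)) → Fin d → Fin n → ℝ)
    (j : Fin n) (t : ℝ) (x : (Fin d → ℝ) × (Fin d → ℝ)) :
    ((Fin d → ℝ) × (Fin d → ℝ)) →L[ℝ] ℝ :=
  (∑ m, ((x.2 m) • ((fderiv ℝ (fun v => XQS v m j) (t • x.1, t • x.2)).comp
        (t • ContinuousLinearMap.id ℝ ((Fin d → ℝ) × (Fin d → ℝ))))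
      + (XQS (t • x.1, t • x.2) m j) • ((ContinuousLinearMap.proj m).comp
          (ContinuousLinearMap.snd ℝ (Fin d → ℝ) (Fin d → ℝ)))))
    - ∑ m, ((x.1 m) • ((fderiv ℝ (fun v => XPS v m j) (t • x.1, t • x.2)).comp
        (t • ContinuousLinearMap.id ℝ ((Fin d → ℝ) × (Fin d → ℝ))))
      + (XPS (t • x.1, t • x.2) m j) • ((ContinuousLinearMap.proj m).comp
          (ContinuousLinearMap.fst ℝ (Fin d → ℝ) (Fin d → ℝ))))

private lemma hasF_D
    (XQS XPS : ((Fin d → ℝ) × (Fin d → ℝ)) → Fin d → Fin n → ℝ)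
    (hXQS : ContDiff ℝ 1 XQS) (hXPS : ContDiff ℝ 1 XPS) (j : Fin n) (t : ℝ)
    (x : (Fin d → ℝ) × (Fin d → ℝ)) :
    HasFDerivAt (fun w : (Fin d → ℝ) × (Fin d → ℝ) =>
        (∑ m, w.2 m * XQS (t • w.1, t • w.2) m j) - ∑ m, w.1 m * XPS (t • w.1, t • w.2) m j)
      (Dmap XQS XPS j t x) x := by
  unfold Dmap
  have hscale : HasFDerivAt (fun w : (Fin d → ℝ) × (Fin d → ℝ) => ((t • w.1, t • w.2) : (Fin d → ℝ) × (Fin d → ℝ)))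
      (t • ContinuousLinearMap.id ℝ ((Fin d → ℝ) × (Fin d → ℝ))) x :=
    (t • ContinuousLinearMap.id ℝ ((Fin d → ℝ) × (Fin d → ℝ))).hasFDerivAt
  apply HasFDerivAt.sub
  · apply HasFDerivAt.fun_sum
    intro m _
    have h1 : HasFDerivAt (fun w : (Fin d → ℝ) × (Fin d → ℝ) => w.2 m)
        ((ContinuousLinearMap.proj m).comp (ContinuousLinearMap.snd ℝ (Fin d → ℝ) (Fin d → ℝ))) x :=
      ((ContinuousLinearMap.proj m).comp (ContinuousLinearMap.snd ℝ (Fin d → ℝ) (Fin d → ℝ))).hasFDerivAt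
    have h2 : HasFDerivAt (fun w : (Fin d → ℝ) × (Fin d → ℝ) => XQS (t • w.1, t • w.2) m j)
        ((fderiv ℝ (fun v => XQS v m j) (t • x.1, t • x.2)).comp
          (t • ContinuousLinearMap.id ℝ ((Fin d → ℝ) × (Fin d → ℝ)))) x :=
      (((comp_contDiff hXQS m j).differentiable one_ne_zero _).hasFDerivAt).comp x hscale
    exact h1.mul h2
  · apply HasFDerivAt.fun_sum
    intro m _
    have h1 : HasFDerivAt (fun w : (Fin d → ℝ) × (Fin d → ℝ) => w.1 m)
        ((ContinuousLinearMap.proj m).comp (ContinuousLinearMap.fst ℝ (Fin d → ℝ) (Fin d → ℝ))) x :=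
      ((ContinuousLinearMap.proj m).comp (ContinuousLinearMap.fst ℝ (Fin d → ℝ) (Fin d → ℝ))).hasFDerivAt
    have h2 : HasFDerivAt (fun w : (Fin d → ℝ) × (Fin d → ℝ) => XPS (t • w.1, t • w.2) m j)
        ((fderiv ℝ (fun v => XPS v m j) (t • x.1, t • x.2)).comp
          (t • ContinuousLinearMap.id ℝ ((Fin d → ℝ) × (Fin d → ℝ)))) x :=
      (((comp_contDiff hXPS m j).differentiable one_ne_zero _).hasFDerivAt).comp x hscale
    exact h1.mul h2

private lemma Dmap_apply_q (XQS XPS : ((Fin d → ℝ) × (Fin d → ℝ)) → Fin d → Fin n → ℝ)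
    (j : Fin n) (t : ℝ) (z : (Fin d → ℝ) × (Fin d → ℝ)) (i : Fin d) :
    Dmap XQS XPS j t z ((Pi.single i 1 : Fin d → ℝ), (0 : Fin d → ℝ))
      = (∑ m, z.2 m * (t * pdq d (fun v => XQS v m j) i (t • z.1, t • z.2)))
        - (XPS (t • z.1, t • z.2) i j
           + ∑ m, z.1 m * (t * pdq d (fun v => XPS v m j) i (t • z.1, t • z.2))) := by
  simp only [Dmap, ContinuousLinearMap.sub_apply, ContinuousLinearMap.sum_apply,
    ContinuousLinearMap.add_apply, ContinuousLinearMap.smul_apply,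
    ContinuousLinearMap.comp_apply, ContinuousLinearMap.proj_apply,
    ContinuousLinearMap.coe_snd', ContinuousLinearMap.coe_fst',
    ContinuousLinearMap.id_apply, _root_.map_smul, smul_eq_mul, pdq]
  simp [Pi.single_apply, Finset.sum_add_distrib, mul_ite, Finset.sum_ite_eq']
  ring

private lemma Dmap_apply_p (XQS XPS : ((Fin d → ℝ) × (Fin d → ℝ)) → Fin d → Fin n → ℝ)
    (j : Fin n) (t : ℝ) (z : (Fin d → ℝ) × (Fin d → ℝ)) (i : Fin d) :
    Dmap XQS XPS j t z ((0 : Fin d → ℝ), (Pi.single i 1 : Fin d → ℝ))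
      = (∑ m, z.2 m * (t * pdp d (fun v => XQS v m j) i (t • z.1, t • z.2)))
        + XQS (t • z.1, t • z.2) i j
        - ∑ m, z.1 m * (t * pdp d (fun v => XPS v m j) i (t • z.1, t • z.2)) := by
  simp only [Dmap, ContinuousLinearMap.sub_apply, ContinuousLinearMap.sum_apply,
    ContinuousLinearMap.add_apply, ContinuousLinearMap.smul_apply,
    ContinuousLinearMap.comp_apply, ContinuousLinearMap.proj_apply,
    ContinuousLinearMap.coe_snd', ContinuousLinearMap.coe_fst',
    ContinuousLinearMap.id_apply, _root_.map_smul, smul_eq_mul, pdp]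
  simp [Pi.single_apply, Finset.sum_add_distrib, mul_ite, Finset.sum_ite_eq']

private lemma sum_mul_comm (t : ℝ) (c f : Fin d → ℝ) :
    ∑ m, c m * (t * f m) = t * ∑ m, c m * f m := by
  rw [Finset.mul_sum]; exact Finset.sum_congr rfl (fun m _ => by ring)

private lemma key_q (XQS XPS : ((Fin d → ℝ) × (Fin d → ℝ)) → Fin d → Fin n → ℝ)
    (hXQS : ContDiff ℝ 1 XQS) (hXPS : ContDiff ℝ 1 XPS)
    (hint : StochIntegrability d n XQS XPS)
    (z : (Fin d → ℝ) × (Fin d → ℝ)) (i : Fin d) (j : Fin n) (t : ℝ) :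
    HasDerivAt (fun s : ℝ => -(s * XPS (s • z.1, s • z.2) i j))
      (Dmap XQS XPS j t z ((Pi.single i 1 : Fin d → ℝ), (0 : Fin d → ℝ))) t := by
  have h1 : HasDerivAt (fun s : ℝ => s * XPS (s • z.1, s • z.2) i j)
      (1 * XPS (t • z.1, t • z.2) i j
        + t * fderiv ℝ (fun v => XPS v i j) (t • z.1, t • z.2) z) t :=
    (hasDerivAt_id t).mul (hasDerivAt_line _ (comp_contDiff hXPS i j) z t)
  refine h1.neg.congr_deriv ?_
  rw [Dmap_apply_q, dir_decomp]
  have e1 : ∀ m : Fin d, pdq d (fun v => XQS v m j) i (t • z.1, t • z.2)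
      = -(pdp d (fun v => XPS v i j) m (t • z.1, t • z.2)) := fun m => by
    have := (hint (t • z.1, t • z.2) m i j).1; linarith
  have e2 : ∀ m : Fin d, pdq d (fun v => XPS v m j) i (t • z.1, t • z.2)
      = pdq d (fun v => XPS v i j) m (t • z.1, t • z.2) := fun m =>
    ((hint (t • z.1, t • z.2) i m j).2.2).symm
  simp only [e1, e2, mul_neg, neg_mul, Finset.sum_neg_distrib, sum_mul_comm]
  ring

private lemma key_p (XQS XPS : ((Fin d → ℝ) × (Fin d → ℝ)) → Fin d → Fin n → ℝ)
    (hXQS : ContDiff ℝ 1 XQS) (hXPS : ContDiff ℝ 1 XPS)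
    (hint : StochIntegrability d n XQS XPS)
    (z : (Fin d → ℝ) × (Fin d → ℝ)) (i : Fin d) (j : Fin n) (t : ℝ) :
    HasDerivAt (fun s : ℝ => s * XQS (s • z.1, s • z.2) i j)
      (Dmap XQS XPS j t z ((0 : Fin d → ℝ), (Pi.single i 1 : Fin d → ℝ))) t := by
  have h1 : HasDerivAt (fun s : ℝ => s * XQS (s • z.1, s • z.2) i j)
      (1 * XQS (t • z.1, t • z.2) i j
        + t * fderiv ℝ (fun v => XQS v i j) (t • z.1, t • z.2) z) t :=
    (hasDerivAt_id t).mul (hasDerivAt_line _ (comp_contDiff hXQS i j) z t)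
  convert h1 using 1
  rw [Dmap_apply_p, dir_decomp]
  have e1 : ∀ m : Fin d, pdp d (fun v => XQS v m j) i (t • z.1, t • z.2)
      = pdp d (fun v => XQS v i j) m (t • z.1, t • z.2) := fun m =>
    ((hint (t • z.1, t • z.2) i m j).2.1).symm
  have e2 : ∀ m : Fin d, pdp d (fun v => XPS v m j) i (t • z.1, t • z.2)
      = -(pdq d (fun v => XQS v i j) m (t • z.1, t • z.2)) := fun m => by
    have := (hint (t • z.1, t • z.2) i m j).1; linarith
  simp only [e1, e2, mul_neg, neg_mul, Finset.sum_neg_distrib, sum_mul_comm]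
  ring


/-- under the stochastic integrability conditions, the stochastic
Hamiltonian `(H_S)_j(q,p) = ∫₀¹ (Σ_i p_i (X_{Q,S})_{ij}(λq,λp) − Σ_i q_i
(X_{P,S})_{ij}(λq,λp)) dλ` satisfies `∂(H_S)_j/∂q_i = −(X_{P,S})_{ij}` and
`∂(H_S)_j/∂p_i = (X_{Q,S})_{ij}`. -/
theorem stmt5 (d n : ℕ) (hd : 1 ≤ d) (hn : 1 ≤ n)
    (XQS XPS : ((Fin d → ℝ) × (Fin d → ℝ)) → Fin d → Fin n → ℝ)
    (hXQS : ContDiff ℝ 1 XQS) (hXPS : ContDiff ℝ 1 XPS)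
    (hint : StochIntegrability d n XQS XPS)
    (HS : ((Fin d → ℝ) × (Fin d → ℝ)) → Fin n → ℝ)
    (hHS : ∀ (z : (Fin d → ℝ) × (Fin d → ℝ)) (j : Fin n),
      HS z j = ∫ l in (0:ℝ)..1,
        ((∑ i, z.2 i * XQS (l • z.1, l • z.2) i j) -
          ∑ i, z.1 i * XPS (l • z.1, l • z.2) i j)) :
    ∀ (z : (Fin d → ℝ) × (Fin d → ℝ)) (i : Fin d) (j : Fin n),
      pdq d (fun w => HS w j) i z = - XPS z i j ∧
      pdp d (fun w => HS w j) i z = XQS z i j := by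
  intro z i j
  set G : ℝ × ((Fin d → ℝ) × (Fin d → ℝ)) → ℝ := fun r =>
    (∑ m, r.2.2 m * XQS (r.1 • r.2.1, r.1 • r.2.2) m j)
      - ∑ m, r.2.1 m * XPS (r.1 • r.2.1, r.1 • r.2.2) m j with hGdef
  have hs : ContDiff ℝ 1 (fun r : ℝ × ((Fin d → ℝ) × (Fin d → ℝ)) =>
      ((r.1 • r.2.1, r.1 • r.2.2) : (Fin d → ℝ) × (Fin d → ℝ))) :=
    (contDiff_fst.smul contDiff_snd.fst).prodMk (contDiff_fst.smul contDiff_snd.snd)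
  have hG : ContDiff ℝ 1 G := by
    apply ContDiff.sub
    · apply ContDiff.sum
      intro m _
      exact (((ContinuousLinearMap.proj m).contDiff).comp contDiff_snd.snd).mul
        ((comp_contDiff hXQS m j).comp hs)
    · apply ContDiff.sum
      intro m _
      exact (((ContinuousLinearMap.proj m).contDiff).comp contDiff_snd.fst).mul
        ((comp_contDiff hXPS m j).comp hs)
  set J : ((Fin d → ℝ) × (Fin d → ℝ)) →L[ℝ] ℝ × ((Fin d → ℝ) × (Fin d → ℝ)) :=
    (0 : ((Fin d → ℝ) × (Fin d → ℝ)) →L[ℝ] ℝ).prod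
      (ContinuousLinearMap.id ℝ ((Fin d → ℝ) × (Fin d → ℝ))) with hJdef
  set F' : ((Fin d → ℝ) × (Fin d → ℝ)) → ℝ → (((Fin d → ℝ) × (Fin d → ℝ)) →L[ℝ] ℝ) :=
    fun x t => (fderiv ℝ G (t, x)).comp J with hF'def
  have hFd : ∀ (t : ℝ) (x : (Fin d → ℝ) × (Fin d → ℝ)),
      HasFDerivAt (fun y => G (t, y)) (F' x t) x := by
    intro t x
    have h2 : HasFDerivAt (fun y : (Fin d → ℝ) × (Fin d → ℝ) =>
        ((t, y) : ℝ × ((Fin d → ℝ) × (Fin d → ℝ)))) J x :=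
      (hasFDerivAt_const t x).prodMk (hasFDerivAt_id x)
    exact ((hG.differentiable one_ne_zero (t, x)).hasFDerivAt).comp x h2
  have hJ : ‖J‖ ≤ 1 := by
    apply ContinuousLinearMap.opNorm_le_bound J zero_le_one
    intro u
    rw [one_mul]
    apply le_of_eq
    show ‖((0 : ℝ), u)‖ = ‖u‖
    simp [Prod.norm_def]
  obtain ⟨C, hC⟩ := ((isCompact_Icc (a := (0:ℝ)) (b := 1)).prod
      (isCompact_closedBall z 1)).exists_bound_of_continuousOn
    ((hG.continuous_fderiv one_ne_zero).continuousOn)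
  have hC0 : 0 ≤ C :=
    le_trans (norm_nonneg _) (hC (0, z) ⟨⟨le_rfl, zero_le_one⟩, Metric.mem_closedBall_self zero_le_one⟩)
  have hF'zc : Continuous (F' z) :=
    ((hG.continuous_fderiv one_ne_zero).comp (continuous_id.prodMk continuous_const)).clm_comp
      continuous_const
  have main : HasFDerivAt (fun x => ∫ t in (0:ℝ)..1, G (t, x))
      (∫ t in (0:ℝ)..1, F' z t) z := by
    apply intervalIntegral.hasFDerivAt_integral_of_dominated_of_fderiv_le
      (bound := fun _ => C) (s := Metric.ball z 1) (Metric.ball_mem_nhds z zero_lt_one)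
    · exact Filter.Eventually.of_forall fun x =>
        ((hG.continuous.comp (continuous_id.prodMk continuous_const)).aestronglyMeasurable).restrict
    · exact (hG.continuous.comp (continuous_id.prodMk continuous_const)).intervalIntegrable 0 1
    · exact hF'zc.aestronglyMeasurable.restrict
    · apply Filter.Eventually.of_forall
      intro t ht x hx
      have htI : t ∈ Set.Icc (0:ℝ) 1 := by
        rw [Set.uIoc_of_le zero_le_one] at ht
        exact ⟨le_of_lt ht.1, ht.2⟩
      calc ‖(fderiv ℝ G (t, x)).comp J‖ ≤ ‖fderiv ℝ G (t, x)‖ * ‖J‖ :=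
            ContinuousLinearMap.opNorm_comp_le _ _
        _ ≤ C * 1 := mul_le_mul (hC (t, x) ⟨htI, Metric.ball_subset_closedBall hx⟩) hJ
            (norm_nonneg _) hC0
        _ = C := mul_one C
    · exact intervalIntegrable_const
    · exact Filter.Eventually.of_forall fun t _ x _ => hFd t x
  have hfun : (fun w : (Fin d → ℝ) × (Fin d → ℝ) => HS w j)
      = fun x => ∫ t in (0:ℝ)..1, G (t, x) := funext fun w => hHS w j
  have hHSd : HasFDerivAt (fun w => HS w j) (∫ t in (0:ℝ)..1, F' z t) z := by
    rw [hfun]; exact main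
  have hFD_eq : ∀ t : ℝ, F' z t = Dmap XQS XPS j t z := fun t =>
    (hFd t z).unique (hasF_D XQS XPS hXQS hXPS j t z)
  have happly : ∀ u : (Fin d → ℝ) × (Fin d → ℝ),
      (∫ t in (0:ℝ)..1, F' z t) u = ∫ t in (0:ℝ)..1, F' z t u := by
    intro u
    rw [intervalIntegral.integral_of_le zero_le_one, intervalIntegral.integral_of_le zero_le_one]
    exact ContinuousLinearMap.integral_apply (hF'zc.integrableOn_Ioc) u
  have hcontu : ∀ u : (Fin d → ℝ) × (Fin d → ℝ), Continuous fun t => F' z t u :=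
    fun u => hF'zc.clm_apply continuous_const
  constructor
  · show fderiv ℝ (fun w => HS w j) z ((Pi.single i 1 : Fin d → ℝ), 0) = _
    rw [hHSd.fderiv, happly]
    simp only [hFD_eq]
    rw [intervalIntegral.integral_eq_sub_of_hasDerivAt
      (fun t _ => key_q XQS XPS hXQS hXPS hint z i j t)
      (by simpa only [hFD_eq] using (hcontu _).intervalIntegrable 0 1)]
    simp
  · show fderiv ℝ (fun w => HS w j) z (0, (Pi.single i 1 : Fin d → ℝ)) = _
    rw [hHSd.fderiv, happly]
    simp only [hFD_eq]
    rw [intervalIntegral.integral_eq_sub_of_hasDerivAt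
      (fun t _ => key_p XQS XPS hXQS hXPS hint z i j t)
      (by simpa only [hFD_eq] using (hcontu _).intervalIntegrable 0 1)]
    simp
end
end

section
/- Let d ≥ 1 and let X_{Q,D}, X_{P,D} : ℝ^d × ℝ^d → ℝ^d and X_{Q,S}, X_{P,S} : ℝ^d × ℝ^d → ℝ^{d×n} all be continuously differentiable. Then the following are equivalent: (a) there exist twice continuously differentiable H_D : ℝ^d × ℝ^d → ℝ and H_S : ℝ^d × ℝ^d → ℝ^n with X_{Q,D} = ∂H_D/∂p, X_{P,D} = −∂H_D/∂q, (X_{Q,S})_{ij} = ∂(H_S)_j/∂p_i and (X_{P,S})_{ij} = −∂(H_S)_j/∂q_i; (b) the drift pair (X_{Q,D}, X_{P,D}) satisfies the Hamiltonian integrability conditions and the diffusion pair (X_{Q,S}, X_{P,S}) satisfies, for all (q,p), all i,k ∈ {1,…,d} and all j ∈ {1,…,n}: ∂(X_{Q,S})_{ij}/∂q_k + ∂(X_{P,S})_{kj}/∂p_i = 0, ∂(X_{Q,S})_{ij}/∂p_k = ∂(X_{Q,S})_{kj}/∂p_i, and ∂(X_{P,S})_{ij}/∂q_k = ∂(X_{P,S})_{kj}/∂q_i.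 Moreover, in the affirmative case one may take H_D(q,p) = ∫₀¹ ( ⟨p, X_{Q,D}(λq,λp)⟩ − ⟨q, X_{P,D}(λq,λp)⟩ ) dλ and (H_S)_j(q,p) = ∫₀¹ ( Σ_i p_i (X_{Q,S})_{ij}(λq,λp) − Σ_i q_i (X_{P,S})_{ij}(λq,λp) ) dλ. -/
noncomputable section

/-- The candidate deterministic Hamiltonian. -/
def candidateHD (d : ℕ) (XQD XPD : ((Fin d → ℝ) × (Fin d → ℝ)) → (Fin d → ℝ))
    (z : (Fin d → ℝ) × (Fin d → ℝ)) : ℝ :=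
  ∫ l in (0:ℝ)..1,
    ((∑ i, z.2 i * XQD (l • z.1, l • z.2) i) - ∑ i, z.1 i * XPD (l • z.1, l • z.2) i)

open MeasureTheory intervalIntegral Metric

section Poincare
variable {E : Type*} [NormedAddCommGroup E] [NormedSpace ℝ E] [FiniteDimensional ℝ E]

lemma clm_bilin_symm {ι : Type*} [Fintype ι] (b : Module.Basis ι ℝ E) (B : E →L[ℝ] E →L[ℝ] ℝ)
    (h : ∀ i j, B (b i) (b j) = B (b j) (b i)) (u v : E) : B u v = B v u := by
  conv_lhs => rw [← b.sum_repr u, ← b.sum_repr v]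
  conv_rhs => rw [← b.sum_repr u, ← b.sum_repr v]
  simp only [map_sum, _root_.map_smul, ContinuousLinearMap.coe_sum', Finset.sum_apply,
    ContinuousLinearMap.coe_smul', Pi.smul_apply, smul_eq_mul]
  simp only [Finset.mul_sum]
  rw [Finset.sum_comm]
  refine Finset.sum_congr rfl fun j _ => Finset.sum_congr rfl fun i _ => ?_
  rw [h]; ring

lemma poincare_hasFDerivAt (ω : E → (E →L[ℝ] ℝ)) (hω : ContDiff ℝ 1 ω)
    (hsymm : ∀ z u v, fderiv ℝ ω z u v = fderiv ℝ ω z v u) (z₀ : E) :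
    HasFDerivAt (fun z => ∫ t in (0:ℝ)..1, ω (t • z) z) (ω z₀) z₀ := by
  have hωd : Differentiable ℝ ω := hω.differentiable one_ne_zero
  have hcont : Continuous ω := hω.continuous
  have hcont' : Continuous (fderiv ℝ ω) := hω.continuous_fderiv one_ne_zero
  set F' : E → ℝ → (E →L[ℝ] ℝ) := fun z t => t • (fderiv ℝ ω (t • z)).flip z + ω (t • z)
    with hF'def
  have hdiff : ∀ (t : ℝ) (z : E), HasFDerivAt (fun z => ω (t • z) z) (F' z t) z := by
    intro t z
    have h1 : HasFDerivAt (fun z : E => t • z) (t • ContinuousLinearMap.id ℝ E) z :=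
      (hasFDerivAt_id z).const_smul t
    have h2 : HasFDerivAt (fun z : E => ω (t • z))
        ((fderiv ℝ ω (t • z)).comp (t • ContinuousLinearMap.id ℝ E)) z :=
      (hωd (t • z)).hasFDerivAt.comp z h1
    have h3 := h2.clm_apply (hasFDerivAt_id z)
    refine h3.congr_fderiv ?_
    ext u
    simp [F', ContinuousLinearMap.flip_apply]
    ring
  have contF : ∀ x : E, Continuous fun t : ℝ => ω (t • x) x := fun x =>
    (hcont.comp (continuous_id.smul continuous_const)).clm_apply continuous_const
  -- continuity of F' jointly
  have hGcont : Continuous (fun p : ℝ × E => F' p.2 p.1) := by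
    have c0 : Continuous fun p : ℝ × E => p.1 • p.2 := continuous_fst.smul continuous_snd
    have c1 : Continuous fun p : ℝ × E => (fderiv ℝ ω (p.1 • p.2)).flip :=
      (ContinuousLinearMap.flipₗᵢ ℝ E E ℝ).continuous.comp (hcont'.comp c0)
    exact ((continuous_fst.smul (c1.clm_apply continuous_snd))).add (hcont.comp c0)
  have contF' : Continuous (F' z₀) := hGcont.comp (continuous_id.prodMk continuous_const)
  obtain ⟨C, hC⟩ := (isCompact_Icc.prod (isCompact_closedBall z₀ 1)).exists_bound_of_continuousOn
    (f := fun p : ℝ × E => F' p.2 p.1) hGcont.continuousOn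
  have key := intervalIntegral.hasFDerivAt_integral_of_dominated_of_fderiv_le
    (F := fun z t => ω (t • z) z) (F' := F') (x₀ := z₀) (a := 0) (b := 1)
    (bound := fun _ => C) (μ := volume) (ball_mem_nhds z₀ one_pos)
    (Filter.Eventually.of_forall fun x => ((contF x).aestronglyMeasurable).restrict)
    ((contF z₀).intervalIntegrable 0 1)
    ((contF' ).aestronglyMeasurable).restrict
    (Filter.Eventually.of_forall fun t ht x hx => by
      have ht' : t ∈ Set.Icc (0:ℝ) 1 := by
        rw [Set.uIoc_of_le (by norm_num : (0:ℝ) ≤ 1)] at ht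
        exact ⟨le_of_lt ht.1, ht.2⟩
      exact hC (t, x) ⟨ht', le_of_lt (mem_ball.1 hx)⟩)
    intervalIntegrable_const
    (Filter.Eventually.of_forall fun t _ x _ => hdiff t x)
  -- now identify the integral with ω z₀
  have hFint : IntervalIntegrable (F' z₀) volume 0 1 := contF'.intervalIntegrable 0 1
  have heq : (∫ t in (0:ℝ)..1, F' z₀ t) = ω z₀ := by
    ext u
    rw [ContinuousLinearMap.intervalIntegral_apply hFint u]
    have hder : ∀ t ∈ Set.uIcc (0:ℝ) 1,
        HasDerivAt (fun t : ℝ => t * ω (t • z₀) u) (F' z₀ t u) t := by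
      intro t _
      have hs : HasDerivAt (fun t : ℝ => t • z₀) z₀ t := by
        simpa using (hasDerivAt_id t).smul_const z₀
      have h1 : HasDerivAt (fun t : ℝ => ω (t • z₀)) (fderiv ℝ ω (t • z₀) z₀) t :=
        (hωd (t • z₀)).hasFDerivAt.comp_hasDerivAt t hs
      have h2 : HasDerivAt (fun t : ℝ => ω (t • z₀) u) ((fderiv ℝ ω (t • z₀) z₀) u) t := by
        simpa using h1.clm_apply (hasDerivAt_const t u)
      have h3 := (hasDerivAt_id t).mul h2
      refine h3.congr_deriv ?_
      simp [F', ContinuousLinearMap.flip_apply]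
      rw [hsymm]
      ring
    have cont2 : Continuous (fun t => F' z₀ t u) := contF'.clm_apply continuous_const
    have hint2 : IntervalIntegrable (fun t => F' z₀ t u) volume 0 1 :=
      cont2.intervalIntegrable 0 1
    rw [intervalIntegral.integral_eq_sub_of_hasDerivAt hder hint2]
    simp
  rwa [heq] at key

lemma poincare_contDiff (ω : E → (E →L[ℝ] ℝ)) (hω : ContDiff ℝ 1 ω)
    (hsymm : ∀ z u v, fderiv ℝ ω z u v = fderiv ℝ ω z v u) :
    ContDiff ℝ 2 (fun z => ∫ t in (0:ℝ)..1, ω (t • z) z) := by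
  have h := poincare_hasFDerivAt ω hω hsymm
  rw [show (2 : WithTop ℕ∞) = 1 + 1 from (one_add_one_eq_two).symm, contDiff_succ_iff_fderiv]
  refine ⟨fun z => (h z).differentiableAt, by simp, ?_⟩
  have : (fderiv ℝ fun z => ∫ t in (0:ℝ)..1, ω (t • z) z) = ω := funext fun z => (h z).fderiv
  rw [this]; exact hω

end Poincare


abbrev Vd (d : ℕ) := (Fin d → ℝ) × (Fin d → ℝ)

def pairForm (d : ℕ) : Vd d →ₗ[ℝ] Vd d →ₗ[ℝ] ℝ :=
  LinearMap.mk₂ ℝ (fun x z => (∑ i, z.2 i * x.1 i) - ∑ i, z.1 i * x.2 i)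
    (fun m m' z => by simp [mul_add, Finset.sum_add_distrib]; ring)
    (fun c m z => by
      simp only [Prod.smul_fst, Prod.smul_snd, Pi.smul_apply, smul_eq_mul, Finset.mul_sum,
        mul_sub]
      congr 1 <;> exact Finset.sum_congr rfl fun i _ => by ring)
    (fun x z z' => by simp [add_mul, Finset.sum_add_distrib]; ring)
    (fun c x z => by
      simp only [Prod.smul_fst, Prod.smul_snd, Pi.smul_apply, smul_eq_mul, Finset.mul_sum,
        mul_sub]
      congr 1 <;> exact Finset.sum_congr rfl fun i _ => by ring)

def AA (d : ℕ) : Vd d →L[ℝ] (Vd d →L[ℝ] ℝ) :=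
  LinearMap.toContinuousLinearMap
    ((LinearMap.toContinuousLinearMap (𝕜 := ℝ) (E := Vd d) (F' := ℝ)).toLinearMap.comp
      (pairForm d))

@[simp] lemma AA_apply (d : ℕ) (x z : Vd d) :
    AA d x z = (∑ i, z.2 i * x.1 i) - ∑ i, z.1 i * x.2 i := rfl

lemma single_mul_sum {d : ℕ} (c : Fin d → ℝ) (k : Fin d) :
    ∑ m, (Pi.single k 1 : Fin d → ℝ) m * c m = c k := by
  simp [Pi.single_apply, ite_mul]

lemma pdq_comp {d : ℕ} (X : Vd d → Fin d → ℝ) {z : Vd d} (hX : DifferentiableAt ℝ X z)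
    (i k : Fin d) :
    pdq d (fun w => X w i) k z = fderiv ℝ X z ((Pi.single k 1 : Fin d → ℝ), 0) i := by
  have h := (ContinuousLinearMap.proj (R := ℝ) (φ := fun _ : Fin d => ℝ) i).hasFDerivAt.comp
    z hX.hasFDerivAt
  have h2 : fderiv ℝ (fun w => X w i) z
      = (ContinuousLinearMap.proj (R := ℝ) (φ := fun _ : Fin d => ℝ) i).comp (fderiv ℝ X z) :=
    h.fderiv
  unfold pdq
  rw [h2]
  rfl

lemma pdp_comp {d : ℕ} (X : Vd d → Fin d → ℝ) {z : Vd d} (hX : DifferentiableAt ℝ X z)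
    (i k : Fin d) :
    pdp d (fun w => X w i) k z = fderiv ℝ X z (0, (Pi.single k 1 : Fin d → ℝ)) i := by
  have h := (ContinuousLinearMap.proj (R := ℝ) (φ := fun _ : Fin d => ℝ) i).hasFDerivAt.comp
    z hX.hasFDerivAt
  have h2 : fderiv ℝ (fun w => X w i) z
      = (ContinuousLinearMap.proj (R := ℝ) (φ := fun _ : Fin d => ℝ) i).comp (fderiv ℝ X z) :=
    h.fderiv
  unfold pdp
  rw [h2]
  rfl

lemma key {d : ℕ} (XQ XP : Vd d → Fin d → ℝ)
    (hXQ : ContDiff ℝ 1 XQ) (hXP : ContDiff ℝ 1 XP)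
    (hint : HamIntegrability d XQ XP) :
    ContDiff ℝ 2 (candidateHD d XQ XP) ∧
      ∀ z i, XQ z i = pdp d (candidateHD d XQ XP) i z ∧
             XP z i = - pdq d (candidateHD d XQ XP) i z := by
  set ω : Vd d → (Vd d →L[ℝ] ℝ) := fun w => AA d (XQ w, XP w) with hωdef
  have hωc : ContDiff ℝ 1 ω := (AA d).contDiff.comp (hXQ.prodMk hXP)
  have hcand : candidateHD d XQ XP = fun z => ∫ t in (0:ℝ)..1, ω (t • z) z := rfl
  have hsymm : ∀ z u v, fderiv ℝ ω z u v = fderiv ℝ ω z v u := by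
    intro z
    have hQd : DifferentiableAt ℝ XQ z := hXQ.differentiable one_ne_zero z
    have hPd : DifferentiableAt ℝ XP z := hXP.differentiable one_ne_zero z
    have hX : HasFDerivAt (fun w => (XQ w, XP w))
        ((fderiv ℝ XQ z).prod (fderiv ℝ XP z)) z := hQd.hasFDerivAt.prodMk hPd.hasFDerivAt
    have hf : fderiv ℝ ω z = (AA d).comp ((fderiv ℝ XQ z).prod (fderiv ℝ XP z)) :=
      ((AA d).hasFDerivAt.comp z hX).fderiv
    have hfv : ∀ u v : Vd d, fderiv ℝ ω z u v =
        (∑ m, v.2 m * fderiv ℝ XQ z u m) - ∑ m, v.1 m * fderiv ℝ XP z u m := by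
      intro u v; rw [hf]; rfl
    have eqq : ∀ (u : Vd d) (k : Fin d),
        fderiv ℝ ω z u ((Pi.single k 1 : Fin d → ℝ), (0 : Fin d → ℝ))
          = - fderiv ℝ XP z u k := by
      intro u k; rw [hfv, single_mul_sum]; simp
    have eqp : ∀ (u : Vd d) (k : Fin d),
        fderiv ℝ ω z u ((0 : Fin d → ℝ), (Pi.single k 1 : Fin d → ℝ))
          = fderiv ℝ XQ z u k := by
      intro u k; rw [hfv, single_mul_sum]; simp
    set bas := (Pi.basisFun ℝ (Fin d)).prod (Pi.basisFun ℝ (Fin d)) with hbas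
    have hbl : ∀ i, bas (Sum.inl i) = ((Pi.single i 1 : Fin d → ℝ), (0 : Fin d → ℝ)) :=
      fun i => Prod.ext (by simp [hbas]) (by simp [hbas])
    have hbr : ∀ i, bas (Sum.inr i) = ((0 : Fin d → ℝ), (Pi.single i 1 : Fin d → ℝ)) :=
      fun i => Prod.ext (by simp [hbas]) (by simp [hbas])
    apply clm_bilin_symm bas
    rintro (i | i) (k | k)
    · rw [hbl, hbl, eqq, eqq, ← pdq_comp XP hPd k i, ← pdq_comp XP hPd i k,
        (hint z k i).2.2]
    · rw [hbl, hbr, eqp, eqq, ← pdq_comp XQ hQd k i, ← pdp_comp XP hPd i k]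
      have h1 := (hint z k i).1
      linarith
    · rw [hbr, hbl, eqq, eqp, ← pdp_comp XP hPd k i, ← pdq_comp XQ hQd i k]
      have h1 := (hint z i k).1
      linarith
    · rw [hbr, hbr, eqp, eqp, ← pdp_comp XQ hQd k i, ← pdp_comp XQ hQd i k,
        (hint z k i).2.1]
  have hfz : ∀ z, fderiv ℝ (candidateHD d XQ XP) z = ω z := by
    intro z; rw [hcand]; exact (poincare_hasFDerivAt ω hωc hsymm z).fderiv
  refine ⟨hcand ▸ poincare_contDiff ω hωc hsymm, fun z i => ⟨?_, ?_⟩⟩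
  · show XQ z i = fderiv ℝ (candidateHD d XQ XP) z ((0 : Fin d → ℝ), Pi.single i 1)
    rw [hfz, hωdef]
    rw [AA_apply, single_mul_sum]
    simp
  · show XP z i = - fderiv ℝ (candidateHD d XQ XP) z (Pi.single i 1, (0 : Fin d → ℝ))
    rw [hfz, hωdef]
    rw [AA_apply, single_mul_sum]
    simp

lemma converse {d : ℕ} (H : Vd d → ℝ) (hH : ContDiff ℝ 2 H)
    (XQ XP : Vd d → Fin d → ℝ)
    (hQ : ∀ z i, XQ z i = pdp d H i z) (hP : ∀ z i, XP z i = - pdq d H i z) :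
    HamIntegrability d XQ XP := by
  have hdH : ContDiff ℝ 1 (fderiv ℝ H) :=
    hH.fderiv_right (le_of_eq one_add_one_eq_two)
  have hder : ∀ (v : Vd d) (z u : Vd d), fderiv ℝ (fun w => fderiv ℝ H w v) z u
      = fderiv ℝ (fderiv ℝ H) z u v := by
    intro v z u
    rw [fderiv_clm_apply (hdH.differentiable one_ne_zero z) (differentiableAt_const v)]
    simp
  intro z i k
  have hsymm := (hH.contDiffAt (x := z)).isSymmSndFDerivAt (by simp)
  have hQf : ∀ i : Fin d, (fun w => XQ w i)
      = fun w => fderiv ℝ H w ((0 : Fin d → ℝ), (Pi.single i 1 : Fin d → ℝ)) :=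
    fun i => funext fun w => hQ w i
  have hPf : ∀ i : Fin d, (fun w => XP w i)
      = fun w => - fderiv ℝ H w ((Pi.single i 1 : Fin d → ℝ), (0 : Fin d → ℝ)) :=
    fun i => funext fun w => hP w i
  have hderneg : ∀ (v : Vd d) (z u : Vd d),
      fderiv ℝ (fun w => - fderiv ℝ H w v) z u = - fderiv ℝ (fderiv ℝ H) z u v := by
    intro v z u
    rw [fderiv_fun_neg]
    simp [hder]
  refine ⟨?_, ?_, ?_⟩
  · rw [hQf i, hPf k]
    unfold pdq pdp
    rw [hder, hderneg, hsymm]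
    ring
  · rw [hQf i, hQf k]
    unfold pdp
    rw [hder, hder, hsymm]
  · rw [hPf i, hPf k]
    unfold pdq
    rw [hderneg, hderneg, hsymm]

/-- stochastic Hamiltonian Helmholtz theorem, coefficient level:
the drift and diffusion coefficients derive from potentials `H_D`, `H_S` iff the
drift pair satisfies the Hamiltonian integrability conditions and the diffusion
pair satisfies the stochastic integrability conditions; in the affirmative case
one may take the explicit candidates. -/
theorem stmt7 (d n : ℕ) (hd : 1 ≤ d)
    (XQD XPD : ((Fin d → ℝ) × (Fin d → ℝ)) → (Fin d → ℝ))
    (XQS XPS : ((Fin d → ℝ) × (Fin d → ℝ)) → Fin d → Fin n → ℝ)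
    (hXQD : ContDiff ℝ 1 XQD) (hXPD : ContDiff ℝ 1 XPD)
    (hXQS : ContDiff ℝ 1 XQS) (hXPS : ContDiff ℝ 1 XPS) :
    ((∃ HD : ((Fin d → ℝ) × (Fin d → ℝ)) → ℝ,
      ∃ HS : ((Fin d → ℝ) × (Fin d → ℝ)) → Fin n → ℝ,
        ContDiff ℝ 2 HD ∧ ContDiff ℝ 2 HS ∧
        (∀ (z : (Fin d → ℝ) × (Fin d → ℝ)) (i : Fin d),
          XQD z i = pdp d HD i z ∧ XPD z i = - pdq d HD i z) ∧
        (∀ (z : (Fin d → ℝ) × (Fin d → ℝ)) (i : Fin d) (j : Fin n),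
          XQS z i j = pdp d (fun w => HS w j) i z ∧
          XPS z i j = - pdq d (fun w => HS w j) i z)) ↔
      (HamIntegrability d XQD XPD ∧ StochIntegrability d n XQS XPS)) ∧
    ((HamIntegrability d XQD XPD ∧ StochIntegrability d n XQS XPS) →
      (ContDiff ℝ 2 (candidateHD d XQD XPD) ∧
        ContDiff ℝ 2 (candidateHS d n XQS XPS) ∧
        (∀ (z : (Fin d → ℝ) × (Fin d → ℝ)) (i : Fin d),
          XQD z i = pdp d (candidateHD d XQD XPD) i z ∧
          XPD z i = - pdq d (candidateHD d XQD XPD) i z) ∧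
        (∀ (z : (Fin d → ℝ) × (Fin d → ℝ)) (i : Fin d) (j : Fin n),
          XQS z i j = pdp d (fun w => candidateHS d n XQS XPS w j) i z ∧
          XPS z i j = - pdq d (fun w => candidateHS d n XQS XPS w j) i z))) := by
  have slicesQ : ∀ j : Fin n, ContDiff ℝ 1 (fun w i => XQS w i j) :=
    fun j => contDiff_pi.2 fun i => contDiff_pi.1 (contDiff_pi.1 hXQS i) j
  have slicesP : ∀ j : Fin n, ContDiff ℝ 1 (fun w i => XPS w i j) :=
    fun j => contDiff_pi.2 fun i => contDiff_pi.1 (contDiff_pi.1 hXPS i) j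
  have main : (HamIntegrability d XQD XPD ∧ StochIntegrability d n XQS XPS) →
      (ContDiff ℝ 2 (candidateHD d XQD XPD) ∧
        ContDiff ℝ 2 (candidateHS d n XQS XPS) ∧
        (∀ (z : (Fin d → ℝ) × (Fin d → ℝ)) (i : Fin d),
          XQD z i = pdp d (candidateHD d XQD XPD) i z ∧
          XPD z i = - pdq d (candidateHD d XQD XPD) i z) ∧
        (∀ (z : (Fin d → ℝ) × (Fin d → ℝ)) (i : Fin d) (j : Fin n),
          XQS z i j = pdp d (fun w => candidateHS d n XQS XPS w j) i z ∧
          XPS z i j = - pdq d (fun w => candidateHS d n XQS XPS w j) i z)) := by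
    rintro ⟨h1, h2⟩
    obtain ⟨hc1, hc2⟩ := key XQD XPD hXQD hXPD h1
    have hkey := fun j : Fin n =>
      key (fun w i => XQS w i j) (fun w i => XPS w i j) (slicesQ j) (slicesP j)
        (fun z i k => h2 z i k j)
    have hHSrw : candidateHS d n XQS XPS
        = fun z j => candidateHD d (fun w i => XQS w i j) (fun w i => XPS w i j) z := rfl
    refine ⟨hc1, ?_, hc2, ?_⟩
    · rw [hHSrw]; exact contDiff_pi.2 fun j => (hkey j).1
    · intro z i j
      exact (hkey j).2 z i
  refine ⟨⟨?_, fun h => ⟨candidateHD d XQD XPD, candidateHS d n XQS XPS,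
    (main h).1, (main h).2.1, (main h).2.2.1, (main h).2.2.2⟩⟩, main⟩
  rintro ⟨HD, HS, hHD, hHS, hD, hS⟩
  refine ⟨converse HD hHD XQD XPD (fun z i => (hD z i).1) (fun z i => (hD z i).2), ?_⟩
  intro z i k j
  exact converse (fun w => HS w j) (contDiff_pi.1 hHS j) (fun w i => XQS w i j)
    (fun w i => XPS w i j) (fun z i => (hS z i j).1) (fun z i => (hS z i j).2) z i k
end
end

section
/- Let d ≥ 1, let H : ℝ^d × ℝ^d → ℝ be continuously differentiable, and let q, p : [a,b] → ℝ^d be continuously differentiable curves satisfying Hamilton's equations q̇(t) = ∂H/∂p (q(t), p(t)) and ṗ(t) = −∂H/∂q (q(t), p(t)) on [a,b]. Then for all continuously differentiable variations u, v : [a,b] → ℝ^d with u(a) = u(b) = 0 and v(a) = v(b) = 0, the first variation of the functional 𝓛_H(q,p) = ∫_a^b ( ⟨p(t), q̇(t)⟩ − H(q(t), p(t)) ) dt vanishes: d/dε|_{ε=0} 𝓛_H(q + εu, p + εv) = 0. -/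
noncomputable section

lemma sum_smul_single (d : ℕ) (w : Fin d → ℝ) :
    ∑ i, w i • (Pi.single i 1 : Fin d → ℝ) = w := by
  have : ∀ i, w i • (Pi.single i 1 : Fin d → ℝ) = Pi.single i (w i) := by
    intro i
    rw [← Pi.single_smul, smul_eq_mul, mul_one]
  simp_rw [this]
  exact Finset.univ_sum_single w

lemma clm_apply_pair (d : ℕ) (L : ((Fin d → ℝ) × (Fin d → ℝ)) →L[ℝ] ℝ)
    (w₁ w₂ : Fin d → ℝ) :
    L (w₁, w₂) = (∑ i, w₁ i * L ((Pi.single i 1 : Fin d → ℝ), 0)) +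
      ∑ i, w₂ i * L (0, (Pi.single i 1 : Fin d → ℝ)) := by
  have h1 : (w₁, w₂) = (∑ i, w₁ i • (((Pi.single i 1 : Fin d → ℝ), (0 : Fin d → ℝ)) :
      (Fin d → ℝ) × (Fin d → ℝ))) + ∑ i, w₂ i • (((0 : Fin d → ℝ),
      (Pi.single i 1 : Fin d → ℝ)) : (Fin d → ℝ) × (Fin d → ℝ)) := by
    ext <;> simp [Prod.fst_sum, Prod.snd_sum, sum_smul_single]
  rw [h1, map_add, map_sum, map_sum]
  congr 1
  · apply Finset.sum_congr rfl
    intro i _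
    rw [map_smul, smul_eq_mul]
  · apply Finset.sum_congr rfl
    intro i _
    rw [map_smul, smul_eq_mul]

/-- solutions of Hamilton's equations are critical points of the
functional `𝓛_H(q,p) = ∫_a^b (⟨p, q̇⟩ − H(q,p)) dt`: the first variation in any
C¹ direction `(u,v)` vanishing at the endpoints is zero. -/
theorem stmt10 (d : ℕ) (hd : 1 ≤ d) (a b : ℝ) (hab : a ≤ b)
    (H : ((Fin d → ℝ) × (Fin d → ℝ)) → ℝ) (hH : ContDiff ℝ 1 H)
    (q p : ℝ → Fin d → ℝ)
    (hq : ContDiff ℝ 1 q) (hp : ContDiff ℝ 1 p)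
    (hamq : ∀ t ∈ Set.Icc a b, deriv q t = fun i => pdp d H i (q t, p t))
    (hamp : ∀ t ∈ Set.Icc a b, deriv p t = fun i => - pdq d H i (q t, p t)) :
    ∀ u v : ℝ → Fin d → ℝ, ContDiff ℝ 1 u → ContDiff ℝ 1 v →
      u a = 0 → u b = 0 → v a = 0 → v b = 0 →
      deriv (fun ε : ℝ => ∫ t in a..b,
        ((∑ i, (p t i + ε * v t i) * (deriv (fun s => q s + ε • u s) t) i) -
          H (q t + ε • u t, p t + ε • v t))) 0 = 0 := by
  intro u v hu hv hua hub hva hvb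
  -- basic differentiability facts
  have hqd : Differentiable ℝ q := hq.differentiable one_ne_zero
  have hud : Differentiable ℝ u := hu.differentiable one_ne_zero
  have hpd : Differentiable ℝ p := hp.differentiable one_ne_zero
  have hvd : Differentiable ℝ v := hv.differentiable one_ne_zero
  have hHd : Differentiable ℝ H := hH.differentiable one_ne_zero
  -- continuity of derivatives
  have hq' : Continuous (deriv q) := hq.continuous_deriv le_rfl
  have hu' : Continuous (deriv u) := hu.continuous_deriv le_rfl
  have hp' : Continuous (deriv p) := hp.continuous_deriv le_rfl
  have hH' : Continuous (fderiv ℝ H) := hH.continuous_fderiv one_ne_zero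
  have hqc : Continuous q := hq.continuous
  have hpc : Continuous p := hp.continuous
  have huc : Continuous u := hu.continuous
  have hvc : Continuous v := hv.continuous
  -- the integrand and its ε-derivative
  set F : ℝ → ℝ → ℝ := fun ε t =>
    (∑ i, (p t i + ε * v t i) * (deriv q t i + ε * deriv u t i)) -
      H (q t + ε • u t, p t + ε • v t) with hF
  set F' : ℝ → ℝ → ℝ := fun ε t =>
    (∑ i, (v t i * (deriv q t i + ε * deriv u t i) +
      (p t i + ε * v t i) * deriv u t i)) -
      fderiv ℝ H (q t + ε • u t, p t + ε • v t) (u t, v t) with hF'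
  -- Step 0: rewrite the function whose derivative we take
  have hrw : (fun ε : ℝ => ∫ t in a..b,
        ((∑ i, (p t i + ε * v t i) * (deriv (fun s => q s + ε • u s) t) i) -
          H (q t + ε • u t, p t + ε • v t))) = fun ε => ∫ t in a..b, F ε t := by
    funext ε
    congr 1
    funext t
    have hds : deriv (fun s => q s + ε • u s) t = deriv q t + ε • deriv u t :=
      ((hqd t).hasDerivAt.add ((hud t).hasDerivAt.const_smul ε)).deriv
    simp [hF, hds]
  rw [hrw]
  -- Step 1: pointwise derivative in ε
  have hderiv : ∀ t : ℝ, ∀ ε : ℝ, HasDerivAt (fun ε => F ε t) (F' ε t) ε := by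
    intro t ε
    have hsum : HasDerivAt (fun ε : ℝ => ∑ i, (p t i + ε * v t i) *
        (deriv q t i + ε * deriv u t i))
        (∑ i, (v t i * (deriv q t i + ε * deriv u t i) +
          (p t i + ε * v t i) * deriv u t i)) ε := by
      apply HasDerivAt.fun_sum
      intro i _
      have h1 : HasDerivAt (fun ε : ℝ => p t i + ε * v t i) (v t i) ε := by
        simpa using ((hasDerivAt_id ε).mul_const (v t i)).const_add (p t i)
      have h2 : HasDerivAt (fun ε : ℝ => deriv q t i + ε * deriv u t i)
          (deriv u t i) ε := by
        simpa using ((hasDerivAt_id ε).mul_const (deriv u t i)).const_add (deriv q t i)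
      simpa using h1.fun_mul h2
    have hin : HasDerivAt (fun ε : ℝ => ((q t + ε • u t, p t + ε • v t) :
        (Fin d → ℝ) × (Fin d → ℝ))) ((u t, v t)) ε := by
      have h1 : HasDerivAt (fun ε : ℝ => q t + ε • u t) (u t) ε := by
        simpa using ((hasDerivAt_id ε).smul_const (u t)).const_add (q t)
      have h2 : HasDerivAt (fun ε : ℝ => p t + ε • v t) (v t) ε := by
        simpa using ((hasDerivAt_id ε).smul_const (v t)).const_add (p t)
      exact h1.prodMk h2
    have hHc : HasDerivAt (fun ε : ℝ => H (q t + ε • u t, p t + ε • v t))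
        (fderiv ℝ H (q t + ε • u t, p t + ε • v t) (u t, v t)) ε :=
      (hHd _).hasFDerivAt.comp_hasDerivAt ε hin
    exact hsum.sub hHc
  -- continuity of F' jointly
  have hcont : Continuous fun z : ℝ × ℝ => F' z.1 z.2 := by
    apply Continuous.sub
    · apply continuous_finset_sum
      intro i _
      fun_prop
    · apply Continuous.clm_apply
      · exact hH'.comp (by fun_prop)
      · fun_prop
  -- Step 2: dominated bound on Icc (-1) 1 × Icc a b
  obtain ⟨C, hC⟩ := (IsCompact.exists_bound_of_continuousOn
    ((isCompact_Icc (a := (-1:ℝ)) (b := 1)).prod (isCompact_Icc (a := a) (b := b)))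
    hcont.continuousOn)
  have key := intervalIntegral.hasDerivAt_integral_of_dominated_loc_of_deriv_le
    (F := F) (F' := F') (x₀ := (0:ℝ)) (a := a) (b := b) (bound := fun _ => C)
    (μ := MeasureTheory.volume) (Metric.ball_mem_nhds (0:ℝ) one_pos)
    (Filter.Eventually.of_forall fun ε => (Continuous.aestronglyMeasurable (by
      apply Continuous.sub
      · apply continuous_finset_sum; intro i _; fun_prop
      · exact hH.continuous.comp (by fun_prop))))
    (Continuous.intervalIntegrable (by
      apply Continuous.sub
      · apply continuous_finset_sum; intro i _; fun_prop
      · exact hH.continuous.comp (by fun_prop)) a b)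
    ((hcont.comp (Continuous.prodMk_right (0:ℝ))).aestronglyMeasurable)
    (Filter.Eventually.of_forall fun t ht ε hε => by
      have h1 : ε ∈ Set.Icc (-1:ℝ) 1 := by
        have h0 := mem_ball_iff_norm.mp hε
        rw [sub_zero, Real.norm_eq_abs] at h0
        exact Set.mem_Icc.mpr (abs_le.mp h0.le)
      have h2 : t ∈ Set.Icc a b :=
        Set.Ioc_subset_Icc_self (by rwa [Set.uIoc_of_le hab] at ht)
      exact hC (ε, t) (Set.mk_mem_prod h1 h2))
    (intervalIntegrable_const)
    (Filter.Eventually.of_forall fun t ht ε hε => hderiv t ε)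
  -- Step 3: identify the value of the derivative
  rw [key.2.deriv]
  -- F' 0 t equals the derivative of t ↦ ∑ p t i * u t i on [a,b]
  set P : ℝ → ℝ := fun s => ∑ i, p s i * u s i with hP
  have hPderiv : ∀ t : ℝ, HasDerivAt P
      (∑ i, (deriv p t i * u t i + p t i * deriv u t i)) t := by
    intro t
    apply HasDerivAt.fun_sum
    intro i _
    exact (hasDerivAt_pi.mp (hpd t).hasDerivAt i).fun_mul (hasDerivAt_pi.mp (hud t).hasDerivAt i)
  have hF'eq : ∀ t ∈ Set.uIcc a b, F' 0 t = deriv P t := by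
    intro t ht
    rw [Set.uIcc_of_le hab] at ht
    rw [(hPderiv t).deriv]
    have hdH : fderiv ℝ H (q t, p t) (u t, v t) =
        (∑ i, u t i * pdq d H i (q t, p t)) + ∑ i, v t i * pdp d H i (q t, p t) :=
      clm_apply_pair d (fderiv ℝ H (q t, p t)) (u t) (v t)
    have hq1 := hamq t ht
    have hp1 := hamp t ht
    have e1 : ∀ i : Fin d, deriv q t i = pdp d H i (q t, p t) := fun i => by
      rw [hq1]
    have e2 : ∀ i : Fin d, deriv p t i = - pdq d H i (q t, p t) := fun i => by
      rw [hp1]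
    have hF'0 : F' 0 t = (∑ i, (v t i * deriv q t i + p t i * deriv u t i)) -
        fderiv ℝ H (q t, p t) (u t, v t) := by
      simp [hF']
    rw [hF'0, hdH]
    simp_rw [e1, e2]
    have e3 : ∀ i : Fin d, - pdq d H i (q t, p t) * u t i =
        -(u t i * pdq d H i (q t, p t)) := fun i => by ring
    simp_rw [e3, Finset.sum_add_distrib, Finset.sum_neg_distrib]
    ring
  rw [intervalIntegral.integral_congr hF'eq]
  have hPc : ContDiff ℝ 1 P := by
    apply ContDiff.sum
    intro i _
    exact ((contDiff_pi.mp hp i)).mul (contDiff_pi.mp hu i)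
  rw [intervalIntegral.integral_deriv_eq_sub
    (fun x _ => (hPc.differentiable one_ne_zero x))
    ((hPc.continuous_deriv le_rfl).intervalIntegrable a b)]
  simp [hP, hua, hub]
end
end

section
/- Let d ≥ 1, a < b, and let X = (X_Q, X_P) : ℝ^d × ℝ^d → ℝ^d × ℝ^d be a continuously differentiable vector field satisfying the Hamiltonian integrability conditions. Let q, p : [a,b] → ℝ^d be continuous, and for C¹ curves u, v : [a,b] → ℝ^d define the linearized operator D(u,v)(t) = ( u̇(t) − A(t)u(t) − B(t)v(t), v̇(t) − C(t)u(t) − E(t)v(t) ), where A(t) = ∂X_Q/∂q (q(t),p(t)), B(t) = ∂X_Q/∂p (q(t),p(t)), C(t) = ∂X_P/∂q (q(t),p(t)), E(t) = ∂X_P/∂p (q(t),p(t)). Then for all C¹ curves u, v, f, g : [a,b] → ℝ^d with u(a)=u(b)=v(a)=v(b)=f(a)=f(b)=g(a)=g(b)=0, one has ∫_a^b ⟨ D(u,v)(t), J·(f(t),g(t)) ⟩ dt = ∫_a^b ⟨ D(f,g)(t), J·(u(t),v(t)) ⟩ dt, where J is the 2d×2d symplectic matrix [[0, I_d], [−I_d,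 0]] and ⟨·,·⟩ is the Euclidean inner product on ℝ^{2d}. -/
noncomputable section

/-- The linearized (Fréchet derivative) operator
`D(u,v)(t) = (u̇ − A u − B v, v̇ − C u − E v)` along the curve `(q,p)`, where
`A = ∂X_Q/∂q`, `B = ∂X_Q/∂p`, `C = ∂X_P/∂q`, `E = ∂X_P/∂p` at `(q(t),p(t))`. -/
def Dop (d : ℕ) (XQ XP : ((Fin d → ℝ) × (Fin d → ℝ)) → (Fin d → ℝ))
    (q p u v : ℝ → Fin d → ℝ) (t : ℝ) : (Fin d → ℝ) × (Fin d → ℝ) :=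
  (fun i => deriv u t i
      - (∑ k, pdq d (fun w => XQ w i) k (q t, p t) * u t k)
      - (∑ k, pdp d (fun w => XQ w i) k (q t, p t) * v t k),
   fun i => deriv v t i
      - (∑ k, pdq d (fun w => XP w i) k (q t, p t) * u t k)
      - (∑ k, pdp d (fun w => XP w i) k (q t, p t) * v t k))


lemma auxA {d : ℕ} (A E : Fin d → Fin d → ℝ) (h : ∀ i k, A i k = - E k i)
    (x y : Fin d → ℝ) :
    ∑ i, (∑ k, A i k * x k) * y i = - ∑ i, (∑ k, E i k * y k) * x i := by
  simp only [Finset.sum_mul, ← Finset.sum_neg_distrib]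
  rw [Finset.sum_comm]
  exact Finset.sum_congr rfl fun k _ => Finset.sum_congr rfl fun i _ => by rw [h]; ring

lemma auxS {d : ℕ} (B : Fin d → Fin d → ℝ) (h : ∀ i k, B i k = B k i)
    (x y : Fin d → ℝ) :
    ∑ i, (∑ k, B i k * x k) * y i = ∑ i, (∑ k, B i k * y k) * x i := by
  simp only [Finset.sum_mul]
  rw [Finset.sum_comm]
  exact Finset.sum_congr rfl fun k _ => Finset.sum_congr rfl fun i _ => by rw [h]; ring

lemma pointwise_alg {d : ℕ} (A B C E : Fin d → Fin d → ℝ)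
    (hAE : ∀ i k, A i k + E k i = 0) (hB : ∀ i k, B i k = B k i)
    (hC : ∀ i k, C i k = C k i)
    (u v f g u' v' f' g' : Fin d → ℝ) :
    ((∑ i, (u' i - (∑ k, A i k * u k) - (∑ k, B i k * v k)) * g i)
      - ∑ i, (v' i - (∑ k, C i k * u k) - (∑ k, E i k * v k)) * f i)
    - ((∑ i, (f' i - (∑ k, A i k * f k) - (∑ k, B i k * g k)) * v i)
      - ∑ i, (g' i - (∑ k, C i k * f k) - (∑ k, E i k * g k)) * u i)
    = (∑ i, (u' i * g i + g' i * u i)) - (∑ i, (v' i * f i + f' i * v i)) := by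
  have hAE' : ∀ i k, A i k = - E k i := fun i k => by linarith [hAE i k]
  have h1 := auxA A E hAE' u g
  have h2 := auxA A E hAE' f v
  have h3 := auxS B hB v g
  have h4 := auxS C hC u f
  simp only [sub_mul, Finset.sum_sub_distrib, Finset.sum_add_distrib]
  linarith

/-- if the C¹ vector field `X = (X_Q, X_P)` satisfies the
Hamiltonian integrability conditions, then the linearized operator `D` along any
continuous curve `(q,p)` is self-adjoint with respect to the `L²` symplectic
scalar product (⟨(x₁,x₂), J·(y₁,y₂)⟩ = ⟨x₁,y₂⟩ − ⟨x₂,y₁⟩). -/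
theorem stmt12 (d : ℕ) (hd : 1 ≤ d) (a b : ℝ) (hab : a < b)
    (XQ XP : ((Fin d → ℝ) × (Fin d → ℝ)) → (Fin d → ℝ))
    (hXQ : ContDiff ℝ 1 XQ) (hXP : ContDiff ℝ 1 XP)
    (hint : HamIntegrability d XQ XP)
    (q p : ℝ → Fin d → ℝ) (hqc : Continuous q) (hpc : Continuous p) :
    ∀ u v f g : ℝ → Fin d → ℝ,
      ContDiff ℝ 1 u → ContDiff ℝ 1 v → ContDiff ℝ 1 f → ContDiff ℝ 1 g →
      u a = 0 → u b = 0 → v a = 0 → v b = 0 →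
      f a = 0 → f b = 0 → g a = 0 → g b = 0 →
      (∫ t in a..b,
        ((∑ i, (Dop d XQ XP q p u v t).1 i * g t i) -
          ∑ i, (Dop d XQ XP q p u v t).2 i * f t i)) =
      (∫ t in a..b,
        ((∑ i, (Dop d XQ XP q p f g t).1 i * v t i) -
          ∑ i, (Dop d XQ XP q p f g t).2 i * u t i)) := by
  intro u v f g hu hv hf hg hua hub hva hvb hfa hfb hga hgb
  -- continuity of the partial-derivative coefficients along the curve
  have hcpd : ∀ (F : ((Fin d → ℝ) × (Fin d → ℝ)) → ℝ), ContDiff ℝ 1 F →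
      ∀ (e : (Fin d → ℝ) × (Fin d → ℝ)),
      Continuous fun t => fderiv ℝ F (q t, p t) e := by
    intro F hF e
    exact ((hF.continuous_fderiv one_ne_zero).comp (hqc.prodMk hpc)).clm_apply continuous_const
  have hXQi : ∀ i, ContDiff ℝ 1 fun w => XQ w i := fun i => contDiff_pi.mp hXQ i
  have hXPi : ∀ i, ContDiff ℝ 1 fun w => XP w i := fun i => contDiff_pi.mp hXP i
  -- continuity of the integrand for general C¹ curves
  have hDcont : ∀ (u v f g : ℝ → Fin d → ℝ), ContDiff ℝ 1 u → ContDiff ℝ 1 v →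
      ContDiff ℝ 1 f → ContDiff ℝ 1 g →
      Continuous fun t =>
        ((∑ i, (Dop d XQ XP q p u v t).1 i * g t i) -
          ∑ i, (Dop d XQ XP q p u v t).2 i * f t i) := by
    intro u v f g hu hv hf hg
    have cu : Continuous u := hu.continuous
    have cv : Continuous v := hv.continuous
    have cf : Continuous f := hf.continuous
    have cg : Continuous g := hg.continuous
    have cdu : Continuous (deriv u) := hu.continuous_deriv le_rfl
    have cdv : Continuous (deriv v) := hv.continuous_deriv le_rfl
    simp only [Dop]
    apply Continuous.sub <;> apply continuous_finset_sum <;> intro i _ <;>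
      apply Continuous.mul
    · exact (((continuous_apply i).comp cdu).sub
        (continuous_finset_sum _ fun k _ =>
          (hcpd _ (hXQi i) _).mul ((continuous_apply k).comp cu))).sub
        (continuous_finset_sum _ fun k _ =>
          (hcpd _ (hXQi i) _).mul ((continuous_apply k).comp cv))
    · exact (continuous_apply i).comp cg
    · exact (((continuous_apply i).comp cdv).sub
        (continuous_finset_sum _ fun k _ =>
          (hcpd _ (hXPi i) _).mul ((continuous_apply k).comp cu))).sub
        (continuous_finset_sum _ fun k _ =>
          (hcpd _ (hXPi i) _).mul ((continuous_apply k).comp cv))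
    · exact (continuous_apply i).comp cf
  -- integration by parts: ∫ (u·g)' = 0 when u vanishes at endpoints
  have ibp : ∀ (u g : ℝ → Fin d → ℝ), ContDiff ℝ 1 u → ContDiff ℝ 1 g →
      u a = 0 → u b = 0 →
      (∫ t in a..b, ∑ i, (deriv u t i * g t i + deriv g t i * u t i)) = 0 := by
    intro u g hu hg hua hub
    have hcont : Continuous fun t => ∑ i, (deriv u t i * g t i + deriv g t i * u t i) := by
      apply continuous_finset_sum; intro i _
      exact (((continuous_apply i).comp (hu.continuous_deriv le_rfl)).mul
        ((continuous_apply i).comp hg.continuous)).add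
        (((continuous_apply i).comp (hg.continuous_deriv le_rfl)).mul
        ((continuous_apply i).comp hu.continuous))
    have hder : ∀ t ∈ Set.uIcc a b, HasDerivAt (fun t => ∑ i, u t i * g t i)
        (∑ i, (deriv u t i * g t i + deriv g t i * u t i)) t := by
      intro t _
      have hu' : HasDerivAt u (deriv u t) t := (hu.differentiable one_ne_zero t).hasDerivAt
      have hg' : HasDerivAt g (deriv g t) t := (hg.differentiable one_ne_zero t).hasDerivAt
      refine HasDerivAt.fun_sum fun i _ => ?_
      have h1 := (hasDerivAt_pi.mp hu') i
      have h2 := (hasDerivAt_pi.mp hg') i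
      have := h1.fun_mul h2
      refine this.congr_deriv ?_
      ring
    rw [intervalIntegral.integral_eq_sub_of_hasDerivAt hder
      (hcont.intervalIntegrable a b)]
    simp [hua, hub]
  set L := fun t =>
      ((∑ i, (Dop d XQ XP q p u v t).1 i * g t i) -
        ∑ i, (Dop d XQ XP q p u v t).2 i * f t i) with hLdef
  set R := fun t =>
      ((∑ i, (Dop d XQ XP q p f g t).1 i * v t i) -
        ∑ i, (Dop d XQ XP q p f g t).2 i * u t i) with hRdef
  have hLc : Continuous L := hDcont u v f g hu hv hf hg
  have hRc : Continuous R := hDcont f g u v hf hg hu hv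
  have hLR : ∀ t, L t - R t =
      (∑ i, (deriv u t i * g t i + deriv g t i * u t i)) -
      (∑ i, (deriv v t i * f t i + deriv f t i * v t i)) := by
    intro t
    have hAE : ∀ i k, pdq d (fun w => XQ w i) k (q t, p t)
        + pdp d (fun w => XP w k) i (q t, p t) = 0 := fun i k => (hint (q t, p t) i k).1
    have hB : ∀ i k, pdp d (fun w => XQ w i) k (q t, p t)
        = pdp d (fun w => XQ w k) i (q t, p t) := fun i k => (hint (q t, p t) i k).2.1
    have hC : ∀ i k, pdq d (fun w => XP w i) k (q t, p t)
        = pdq d (fun w => XP w k) i (q t, p t) := fun i k => (hint (q t, p t) i k).2.2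
    have h := pointwise_alg
      (fun i k => pdq d (fun w => XQ w i) k (q t, p t))
      (fun i k => pdp d (fun w => XQ w i) k (q t, p t))
      (fun i k => pdq d (fun w => XP w i) k (q t, p t))
      (fun i k => pdp d (fun w => XP w i) k (q t, p t))
      hAE hB hC
      (u t) (v t) (f t) (g t) (deriv u t) (deriv v t) (deriv f t) (deriv g t)
    simpa [hLdef, hRdef, Dop] using h
  have hsplit : (∫ t in a..b, L t) - ∫ t in a..b, R t
      = ∫ t in a..b, (L t - R t) :=
    (intervalIntegral.integral_sub (hLc.intervalIntegrable a b)
      (hRc.intervalIntegrable a b)).symm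
  have hzero : (∫ t in a..b, (L t - R t)) = 0 := by
    have : (∫ t in a..b, (L t - R t)) =
        (∫ t in a..b, ∑ i, (deriv u t i * g t i + deriv g t i * u t i)) -
        ∫ t in a..b, ∑ i, (deriv v t i * f t i + deriv f t i * v t i) := by
      rw [← intervalIntegral.integral_sub]
      · exact intervalIntegral.integral_congr fun t _ => hLR t
      · refine Continuous.intervalIntegrable ?_ a b
        apply continuous_finset_sum; intro i _
        exact (((continuous_apply i).comp (hu.continuous_deriv le_rfl)).mul
          ((continuous_apply i).comp hg.continuous)).add
          (((continuous_apply i).comp (hg.continuous_deriv le_rfl)).mul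
          ((continuous_apply i).comp hu.continuous))
      · refine Continuous.intervalIntegrable ?_ a b
        apply continuous_finset_sum; intro i _
        exact (((continuous_apply i).comp (hv.continuous_deriv le_rfl)).mul
          ((continuous_apply i).comp hf.continuous)).add
          (((continuous_apply i).comp (hf.continuous_deriv le_rfl)).mul
          ((continuous_apply i).comp hv.continuous))
    rw [this, ibp u g hu hg hua hub, ibp v f hv hf hva hvb, sub_zero]
  have := hsplit.trans hzero
  linarith
end
end

section
/- Let d ≥ 1, a < b, and let X = (X_Q, X_P) : ℝ^d × ℝ^d → ℝ^d × ℝ^d be a continuously differentiable vector field. Suppose that for every pair of continuously differentiable curves q, p : [a,b] → ℝ^d and all C¹ curves u, v, f, g : [a,b] → ℝ^d vanishing at a and b, one has ∫_a^b ⟨ D(u,v)(t), J·(f(t),g(t)) ⟩ dt = ∫_a^b ⟨ D(f,g)(t), J·(u(t),v(t)) ⟩ dt, where D(u,v)(t) = ( u̇(t) − ∂X_Q/∂q (q(t),p(t)) u(t) − ∂X_Q/∂p (q(t),p(t)) v(t), v̇(t) − ∂X_P/∂q (q(t),p(t)) u(t) − ∂X_P/∂p (q(t),p(t)) v(t) )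 and J = [[0, I_d], [−I_d, 0]]. Then X satisfies the Hamiltonian integrability conditions at every point of ℝ^d × ℝ^d. -/
noncomputable section

/-! ### Auxiliary lemmas -/

/-- The integral of the square of the bump `(t-a)(b-t)` over `[a,b]`. -/
def J2 (a b : ℝ) : ℝ := ∫ t in a..b, ((t-a)*(b-t)) * ((t-a)*(b-t))

lemma J2_pos {a b : ℝ} (hab : a < b) : 0 < J2 a b := by
  apply intervalIntegral.intervalIntegral_pos_of_pos_on
  · exact (Continuous.intervalIntegrable (by fun_prop) a b)
  · intro x hx
    have h1 : 0 < (x - a) * (b - x) := mul_pos (by linarith [hx.1]) (by linarith [hx.2])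
    exact mul_pos h1 h1
  · exact hab

lemma hderφ (a b t : ℝ) : HasDerivAt (fun s : ℝ => (s-a)*(b-s)) (a+b-2*t) t := by
  have h := ((hasDerivAt_id t).sub_const a).mul ((hasDerivAt_const t b).sub (hasDerivAt_id t))
  exact h.congr_deriv (by simp only [id, Pi.sub_apply]; ring)

lemma integral_comb (a b c1 c2 : ℝ) :
    (∫ t in a..b, (c1 * ((a+b-2*t) * ((t-a)*(b-t))) + c2 * (((t-a)*(b-t)) * ((t-a)*(b-t)))))
      = c2 * J2 a b := by
  have hIz : (∫ t in a..b, (a+b-2*t) * ((t-a)*(b-t))) = 0 := by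
    have key : ∀ t ∈ Set.uIcc a b,
        HasDerivAt (fun s : ℝ => ((s-a)*(b-s)) * ((s-a)*(b-s)) / 2)
          ((a+b-2*t) * ((t-a)*(b-t))) t := by
      intro t _
      have h := ((hderφ a b t).mul (hderφ a b t)).div_const 2
      exact h.congr_deriv (by ring)
    have := intervalIntegral.integral_eq_sub_of_hasDerivAt key
      (Continuous.intervalIntegrable (by fun_prop) a b)
    simpa using this
  rw [intervalIntegral.integral_add
      ((Continuous.intervalIntegrable (by fun_prop) a b))
      ((Continuous.intervalIntegrable (by fun_prop) a b)),
    intervalIntegral.integral_const_mul, intervalIntegral.integral_const_mul, hIz, J2]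
  ring

lemma curve_deriv {d : ℕ} (a b : ℝ) (c : Fin d → ℝ) :
    deriv (fun t : ℝ => ((t-a)*(b-t)) • c) = fun t => (a+b-2*t) • c := by
  funext t
  exact ((hderφ a b t).smul_const c).deriv

lemma curve_contDiff {d : ℕ} (a b : ℝ) (c : Fin d → ℝ) :
    ContDiff ℝ 1 (fun t : ℝ => ((t-a)*(b-t)) • c) :=
  (((contDiff_id.sub contDiff_const).mul (contDiff_const.sub contDiff_id))).smul contDiff_const

lemma curve_a {d : ℕ} (a b : ℝ) (c : Fin d → ℝ) :
    (fun t : ℝ => ((t-a)*(b-t)) • c) a = 0 := by simp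

lemma curve_b {d : ℕ} (a b : ℝ) (c : Fin d → ℝ) :
    (fun t : ℝ => ((t-a)*(b-t)) • c) b = 0 := by simp

/-- if the linearized operator `D` along every pair of C¹ curves
`(q,p)` is self-adjoint with respect to the `L²` symplectic scalar product
(for all C¹ directions vanishing at the endpoints), then the C¹ vector field
`X = (X_Q, X_P)` satisfies the Hamiltonian integrability conditions everywhere. -/
theorem stmt13 (d : ℕ) (hd : 1 ≤ d) (a b : ℝ) (hab : a < b)
    (XQ XP : ((Fin d → ℝ) × (Fin d → ℝ)) → (Fin d → ℝ))
    (hXQ : ContDiff ℝ 1 XQ) (hXP : ContDiff ℝ 1 XP)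
    (hself : ∀ q p : ℝ → Fin d → ℝ, ContDiff ℝ 1 q → ContDiff ℝ 1 p →
      ∀ u v f g : ℝ → Fin d → ℝ,
      ContDiff ℝ 1 u → ContDiff ℝ 1 v → ContDiff ℝ 1 f → ContDiff ℝ 1 g →
      u a = 0 → u b = 0 → v a = 0 → v b = 0 →
      f a = 0 → f b = 0 → g a = 0 → g b = 0 →
      (∫ t in a..b,
        ((∑ i, (Dop d XQ XP q p u v t).1 i * g t i) -
          ∑ i, (Dop d XQ XP q p u v t).2 i * f t i)) =
      (∫ t in a..b,
        ((∑ i, (Dop d XQ XP q p f g t).1 i * v t i) -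
          ∑ i, (Dop d XQ XP q p f g t).2 i * u t i))) :
    HamIntegrability d XQ XP := by
  intro z i k
  have hJ : J2 a b ≠ 0 := (J2_pos hab).ne'
  have hcancel : ∀ c c' : ℝ, c * J2 a b = c' * J2 a b → c = c' := by
    intro c c' h
    exact mul_right_cancel₀ hJ h
  -- notation
  set A : Fin d → Fin d → ℝ := fun j m => pdq d (fun w => XQ w j) m z with hA
  set B : Fin d → Fin d → ℝ := fun j m => pdp d (fun w => XQ w j) m z with hB
  set C : Fin d → Fin d → ℝ := fun j m => pdq d (fun w => XP w j) m z with hC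
  set E : Fin d → Fin d → ℝ := fun j m => pdp d (fun w => XP w j) m z with hE
  have hz : (z.1, z.2) = z := rfl
  refine ⟨?_, ?_, ?_⟩
  · -- condition 1 : A i k + E k i = 0
    have key := hself (fun _ => z.1) (fun _ => z.2) contDiff_const contDiff_const
      (fun t => ((t-a)*(b-t)) • (Pi.single k 1 : Fin d → ℝ)) (fun _ => 0)
      (fun _ => 0) (fun t => ((t-a)*(b-t)) • (Pi.single i 1 : Fin d → ℝ))
      (curve_contDiff a b _) contDiff_const contDiff_const (curve_contDiff a b _)
      (curve_a a b _) (curve_b a b _) rfl rfl rfl rfl (curve_a a b _) (curve_b a b _)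
    have h1 : ∀ t : ℝ,
        ((∑ j, (Dop d XQ XP (fun _ => z.1) (fun _ => z.2)
            (fun t => ((t-a)*(b-t)) • (Pi.single k 1 : Fin d → ℝ)) (fun _ => 0) t).1 j *
            (((t-a)*(b-t)) • (Pi.single i 1 : Fin d → ℝ)) j) -
          ∑ j, (Dop d XQ XP (fun _ => z.1) (fun _ => z.2)
            (fun t => ((t-a)*(b-t)) • (Pi.single k 1 : Fin d → ℝ)) (fun _ => 0) t).2 j *
            (0 : Fin d → ℝ) j)
        = (Pi.single k 1 : Fin d → ℝ) i * ((a+b-2*t) * ((t-a)*(b-t)))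
          + (-(A i k)) * (((t-a)*(b-t)) * ((t-a)*(b-t))) := by
      intro t
      simp only [Dop, curve_deriv, hz]
      simp [Pi.single_apply, mul_ite, ite_mul, Finset.sum_ite_eq, Finset.sum_ite_eq',
        Finset.sum_sub_distrib, Finset.mul_sum, Finset.sum_mul, hA]
      try (split_ifs with h <;> subst_eqs)
      all_goals ring_nf
    have h2 : ∀ t : ℝ,
        ((∑ j, (Dop d XQ XP (fun _ => z.1) (fun _ => z.2)
            (fun _ => 0) (fun t => ((t-a)*(b-t)) • (Pi.single i 1 : Fin d → ℝ)) t).1 j *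
            (0 : Fin d → ℝ) j) -
          ∑ j, (Dop d XQ XP (fun _ => z.1) (fun _ => z.2)
            (fun _ => 0) (fun t => ((t-a)*(b-t)) • (Pi.single i 1 : Fin d → ℝ)) t).2 j *
            (((t-a)*(b-t)) • (Pi.single k 1 : Fin d → ℝ)) j)
        = (-(Pi.single i 1 : Fin d → ℝ) k) * ((a+b-2*t) * ((t-a)*(b-t)))
          + (E k i) * (((t-a)*(b-t)) * ((t-a)*(b-t))) := by
      intro t
      simp only [Dop, curve_deriv, hz]
      simp [Pi.single_apply, mul_ite, ite_mul, Finset.sum_ite_eq, Finset.sum_ite_eq',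
        Finset.sum_sub_distrib, Finset.mul_sum, Finset.sum_mul, hE]
      try (split_ifs with h <;> subst_eqs)
      all_goals ring_nf
    simp only [h1, h2] at key
    rw [integral_comb, integral_comb] at key
    have := hcancel _ _ key
    linarith
  · -- condition 2 : B i k = B k i
    have key := hself (fun _ => z.1) (fun _ => z.2) contDiff_const contDiff_const
      (fun _ => 0) (fun t => ((t-a)*(b-t)) • (Pi.single k 1 : Fin d → ℝ))
      (fun _ => 0) (fun t => ((t-a)*(b-t)) • (Pi.single i 1 : Fin d → ℝ))
      contDiff_const (curve_contDiff a b _) contDiff_const (curve_contDiff a b _)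
      rfl rfl (curve_a a b _) (curve_b a b _) rfl rfl (curve_a a b _) (curve_b a b _)
    have h1 : ∀ t : ℝ,
        ((∑ j, (Dop d XQ XP (fun _ => z.1) (fun _ => z.2)
            (fun _ => 0) (fun t => ((t-a)*(b-t)) • (Pi.single k 1 : Fin d → ℝ)) t).1 j *
            (((t-a)*(b-t)) • (Pi.single i 1 : Fin d → ℝ)) j) -
          ∑ j, (Dop d XQ XP (fun _ => z.1) (fun _ => z.2)
            (fun _ => 0) (fun t => ((t-a)*(b-t)) • (Pi.single k 1 : Fin d → ℝ)) t).2 j *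
            (0 : Fin d → ℝ) j)
        = (0:ℝ) * ((a+b-2*t) * ((t-a)*(b-t)))
          + (-(B i k)) * (((t-a)*(b-t)) * ((t-a)*(b-t))) := by
      intro t
      simp only [Dop, curve_deriv, hz]
      simp [Pi.single_apply, mul_ite, ite_mul, Finset.sum_ite_eq, Finset.sum_ite_eq',
        Finset.sum_sub_distrib, Finset.mul_sum, Finset.sum_mul, hB]
      try (split_ifs with h <;> subst_eqs)
      all_goals ring_nf
    have h2 : ∀ t : ℝ,
        ((∑ j, (Dop d XQ XP (fun _ => z.1) (fun _ => z.2)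
            (fun _ => 0) (fun t => ((t-a)*(b-t)) • (Pi.single i 1 : Fin d → ℝ)) t).1 j *
            (((t-a)*(b-t)) • (Pi.single k 1 : Fin d → ℝ)) j) -
          ∑ j, (Dop d XQ XP (fun _ => z.1) (fun _ => z.2)
            (fun _ => 0) (fun t => ((t-a)*(b-t)) • (Pi.single i 1 : Fin d → ℝ)) t).2 j *
            (0 : Fin d → ℝ) j)
        = (0:ℝ) * ((a+b-2*t) * ((t-a)*(b-t)))
          + (-(B k i)) * (((t-a)*(b-t)) * ((t-a)*(b-t))) := by
      intro t
      simp only [Dop, curve_deriv, hz]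
      simp [Pi.single_apply, mul_ite, ite_mul, Finset.sum_ite_eq, Finset.sum_ite_eq',
        Finset.sum_sub_distrib, Finset.mul_sum, Finset.sum_mul, hB]
      try (split_ifs with h <;> subst_eqs)
      all_goals ring_nf
    simp only [h1, h2] at key
    rw [integral_comb, integral_comb] at key
    have := hcancel _ _ key
    linarith
  · -- condition 3 : C i k = C k i
    have key := hself (fun _ => z.1) (fun _ => z.2) contDiff_const contDiff_const
      (fun t => ((t-a)*(b-t)) • (Pi.single k 1 : Fin d → ℝ)) (fun _ => 0)
      (fun t => ((t-a)*(b-t)) • (Pi.single i 1 : Fin d → ℝ)) (fun _ => 0)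
      (curve_contDiff a b _) contDiff_const (curve_contDiff a b _) contDiff_const
      (curve_a a b _) (curve_b a b _) rfl rfl (curve_a a b _) (curve_b a b _) rfl rfl
    have h1 : ∀ t : ℝ,
        ((∑ j, (Dop d XQ XP (fun _ => z.1) (fun _ => z.2)
            (fun t => ((t-a)*(b-t)) • (Pi.single k 1 : Fin d → ℝ)) (fun _ => 0) t).1 j *
            (0 : Fin d → ℝ) j) -
          ∑ j, (Dop d XQ XP (fun _ => z.1) (fun _ => z.2)
            (fun t => ((t-a)*(b-t)) • (Pi.single k 1 : Fin d → ℝ)) (fun _ => 0) t).2 j *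
            (((t-a)*(b-t)) • (Pi.single i 1 : Fin d → ℝ)) j)
        = (0:ℝ) * ((a+b-2*t) * ((t-a)*(b-t)))
          + (C i k) * (((t-a)*(b-t)) * ((t-a)*(b-t))) := by
      intro t
      simp only [Dop, curve_deriv, hz]
      simp [Pi.single_apply, mul_ite, ite_mul, Finset.sum_ite_eq, Finset.sum_ite_eq',
        Finset.sum_sub_distrib, Finset.mul_sum, Finset.sum_mul, hC]
      try (split_ifs with h <;> subst_eqs)
      all_goals ring_nf
    have h2 : ∀ t : ℝ,
        ((∑ j, (Dop d XQ XP (fun _ => z.1) (fun _ => z.2)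
            (fun t => ((t-a)*(b-t)) • (Pi.single i 1 : Fin d → ℝ)) (fun _ => 0) t).1 j *
            (0 : Fin d → ℝ) j) -
          ∑ j, (Dop d XQ XP (fun _ => z.1) (fun _ => z.2)
            (fun t => ((t-a)*(b-t)) • (Pi.single i 1 : Fin d → ℝ)) (fun _ => 0) t).2 j *
            (((t-a)*(b-t)) • (Pi.single k 1 : Fin d → ℝ)) j)
        = (0:ℝ) * ((a+b-2*t) * ((t-a)*(b-t)))
          + (C k i) * (((t-a)*(b-t)) * ((t-a)*(b-t))) := by
      intro t
      simp only [Dop, curve_deriv, hz]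
      simp [Pi.single_apply, mul_ite, ite_mul, Finset.sum_ite_eq, Finset.sum_ite_eq',
        Finset.sum_sub_distrib, Finset.mul_sum, Finset.sum_mul, hC]
      try (split_ifs with h <;> subst_eqs)
      all_goals ring_nf
    simp only [h1, h2] at key
    rw [integral_comb, integral_comb] at key
    exact hcancel _ _ key
end
end

section
/- Let d ≥ 1, a < b, and let X = (X_Q, X_P) : ℝ^d × ℝ^d → ℝ^d × ℝ^d be a continuously differentiable vector field. Fix C¹ curves q, p : [a,b] → ℝ^d and consider the map O sending a pair of C¹ curves (q,p) to the pair of continuous curves ( q̇ − X_Q(q,p), ṗ − X_P(q,p) ). Then O is Fréchet differentiable at (q,p) (with respect to the C¹ norm on the domain and the supremum norm on the codomain), and its derivative in the direction of C¹ curves (u,v) is given by DO(q,p)(u,v)(t) = ( u̇(t) − ∂X_Q/∂q (q(t),p(t)) u(t) − ∂X_Q/∂p (q(t),p(t)) v(t), v̇(t) − ∂X_P/∂q (q(t),p(t)) u(t) − ∂X_P/∂p (q(t),p(t)) v(t) ). -/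
set_option synthInstance.maxHeartbeats 1000000
set_option maxHeartbeats 2000000

noncomputable section

/-- The Banach space of C¹ curves `[a,b] → E`, encoded as the submodule of
`C([a,b], E) × C([a,b], E)` consisting of pairs `(f, f')` such that `f'` is the
derivative of `f` on `[a,b]`.  The norm induced from the product of the sup
norms is (equivalent to) the C¹ norm `max(‖f‖_∞, ‖f'‖_∞)`. -/
def C1Space (a b : ℝ) (hab : a ≤ b) (E : Type*)
    [NormedAddCommGroup E] [NormedSpace ℝ E] :
    Submodule ℝ (C(Set.Icc a b, E) × C(Set.Icc a b, E)) where
  carrier := {fg | ∀ (t : ℝ) (ht : t ∈ Set.Icc a b),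
    HasDerivWithinAt (Set.IccExtend hab ⇑fg.1) (fg.2 ⟨t, ht⟩) (Set.Icc a b) t}
  add_mem' := by
    intro f g hf hg t ht
    exact (hf t ht).add (hg t ht)
  zero_mem' := by
    intro t ht
    exact hasDerivWithinAt_const t _ (0 : E)
  smul_mem' := by
    intro c f hf t ht
    exact (hf t ht).const_smul c

/-- Shortcut instance (the general instance search fails to fire). -/
instance C1SpaceProdNormedAddCommGroup (a b : ℝ) (hab : a ≤ b) (E : Type*)
    [NormedAddCommGroup E] [NormedSpace ℝ E] :
    NormedAddCommGroup (↥(C1Space a b hab E) × ↥(C1Space a b hab E)) :=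
  Prod.normedAddCommGroup

/-- Shortcut instance (the general instance search fails to fire). -/
instance C1SpaceProdNormedSpace (a b : ℝ) (hab : a ≤ b) (E : Type*)
    [NormedAddCommGroup E] [NormedSpace ℝ E] :
    NormedSpace ℝ (↥(C1Space a b hab E) × ↥(C1Space a b hab E)) :=
  Prod.normedSpace

def opL (a b : ℝ) (hab : a ≤ b) {E : Type*} [NormedAddCommGroup E]
    [NormedSpace ℝ E] (gQ gP : C(Set.Icc a b, (E × E) →L[ℝ] E)) :
    (↥(C1Space a b hab E) × ↥(C1Space a b hab E)) →L[ℝ]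
      C(Set.Icc a b, E) × C(Set.Icc a b, E) :=
  LinearMap.mkContinuous
    { toFun := fun h =>
        (⟨fun t => h.1.val.2 t - gQ t (h.1.val.1 t, h.2.val.1 t),
          ((h.1.val.2.continuous).sub
            (gQ.continuous.clm_apply
              ((h.1.val.1.continuous).prodMk (h.2.val.1.continuous))))⟩,
         ⟨fun t => h.2.val.2 t - gP t (h.1.val.1 t, h.2.val.1 t),
          ((h.2.val.2.continuous).sub
            (gP.continuous.clm_apply
              ((h.1.val.1.continuous).prodMk (h.2.val.1.continuous))))⟩)
      map_add' := by
        intro h₁ h₂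
        refine Prod.ext ?_ ?_ <;> ext t <;>
        · simp only [Prod.fst_add, Prod.snd_add, Submodule.coe_add,
            ContinuousMap.add_apply, ContinuousMap.coe_mk, Prod.mk.injEq]
          rw [← Prod.mk_add_mk, map_add]
          abel
      map_smul' := by
        intro c h
        refine Prod.ext ?_ ?_ <;> ext t <;>
        · simp only [Prod.smul_fst, Prod.smul_snd, Submodule.coe_smul,
            ContinuousMap.smul_apply, ContinuousMap.coe_mk, RingHom.id_apply]
          rw [← Prod.smul_mk, map_smul, smul_sub] }
    (1 + ‖gQ‖ + ‖gP‖)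
    (by
      intro h
      have hg : (0:ℝ) ≤ ‖gQ‖ := by positivity
      have hp : (0:ℝ) ≤ ‖gP‖ := by positivity
      have hh : (0:ℝ) ≤ ‖h‖ := by positivity
      have hu : ∀ t : Set.Icc a b, ‖h.1.val.1 t‖ ≤ ‖h‖ := fun t =>
        le_trans (ContinuousMap.norm_coe_le_norm _ t)
          (le_trans (norm_fst_le h.1.val) (norm_fst_le h))
      have hv : ∀ t : Set.Icc a b, ‖h.2.val.1 t‖ ≤ ‖h‖ := fun t =>
        le_trans (ContinuousMap.norm_coe_le_norm _ t)
          (le_trans (norm_fst_le h.2.val) (norm_snd_le h))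
      have hu' : ∀ t : Set.Icc a b, ‖h.1.val.2 t‖ ≤ ‖h‖ := fun t =>
        le_trans (ContinuousMap.norm_coe_le_norm _ t)
          (le_trans (norm_snd_le h.1.val) (norm_fst_le h))
      have hv' : ∀ t : Set.Icc a b, ‖h.2.val.2 t‖ ≤ ‖h‖ := fun t =>
        le_trans (ContinuousMap.norm_coe_le_norm _ t)
          (le_trans (norm_snd_le h.2.val) (norm_snd_le h))
      have hb : ∀ t : Set.Icc a b, ‖(h.1.val.1 t, h.2.val.1 t)‖ ≤ ‖h‖ := fun t => by
        rw [Prod.norm_def]; exact max_le (hu t) (hv t)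
      rw [Prod.norm_def]
      apply max_le
      · rw [ContinuousMap.norm_le _ (by positivity)]
        intro t
        refine le_trans (norm_sub_le _ _) ?_
        calc ‖h.1.val.2 t‖ + ‖gQ t (h.1.val.1 t, h.2.val.1 t)‖
            ≤ ‖h‖ + ‖gQ‖ * ‖h‖ := add_le_add (hu' t)
              (le_trans ((gQ t).le_opNorm _)
                (mul_le_mul (gQ.norm_coe_le_norm t) (hb t) (by positivity) hg))
          _ ≤ (1 + ‖gQ‖ + ‖gP‖) * ‖h‖ := by nlinarith
      · rw [ContinuousMap.norm_le _ (by positivity)]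
        intro t
        refine le_trans (norm_sub_le _ _) ?_
        calc ‖h.2.val.2 t‖ + ‖gP t (h.1.val.1 t, h.2.val.1 t)‖
            ≤ ‖h‖ + ‖gP‖ * ‖h‖ := add_le_add (hv' t)
              (le_trans ((gP t).le_opNorm _)
                (mul_le_mul (gP.norm_coe_le_norm t) (hb t) (by positivity) hp))
          _ ≤ (1 + ‖gQ‖ + ‖gP‖) * ‖h‖ := by nlinarith)

lemma key_unif {F G : Type*} [NormedAddCommGroup F] [NormedSpace ℝ F] [ProperSpace F]
    [NormedAddCommGroup G] [NormedSpace ℝ G] (X : F → G) (hX : ContDiff ℝ 1 X)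
    {S : Set F} (hS : IsCompact S) {ε : ℝ} (hε : 0 < ε) :
    ∃ δ > 0, ∀ x ∈ S, ∀ z : F, ‖z‖ ≤ δ →
      ‖X (x + z) - X x - fderiv ℝ X x z‖ ≤ ε * ‖z‖ := by
  have hT : IsCompact (Metric.cthickening 1 S) := hS.cthickening
  have hunif : UniformContinuousOn (fderiv ℝ X) (Metric.cthickening 1 S) :=
    hT.uniformContinuousOn_of_continuous (hX.continuous_fderiv one_ne_zero).continuousOn
  rw [Metric.uniformContinuousOn_iff] at hunif
  obtain ⟨δ', hδ'pos, hδ'⟩ := hunif ε hε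
  refine ⟨min (δ' / 2) 1, by positivity, ?_⟩
  intro x hx z hz
  set δ := min (δ' / 2) 1 with hδdef
  have hδpos : (0:ℝ) < δ := by positivity
  have hδ1 : δ ≤ 1 := min_le_right _ _
  have hsub : Metric.closedBall x δ ⊆ Metric.cthickening 1 S := by
    intro w hw
    exact Metric.mem_cthickening_of_dist_le w x 1 S hx
      (le_trans (Metric.mem_closedBall.mp hw) hδ1)
  have hdiff : ∀ w ∈ Metric.closedBall x δ,
      HasFDerivWithinAt X (fderiv ℝ X w) (Metric.closedBall x δ) w := fun w _ =>
    ((hX.differentiable one_ne_zero).differentiableAt.hasFDerivAt).hasFDerivWithinAt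
  have hbound : ∀ w ∈ Metric.closedBall x δ, ‖fderiv ℝ X w - fderiv ℝ X x‖ ≤ ε := by
    intro w hw
    have hd : dist w x < δ' := lt_of_le_of_lt
      (le_trans (Metric.mem_closedBall.mp hw) (min_le_left _ _)) (by linarith)
    have := hδ' w (hsub hw) x (Metric.self_subset_cthickening S hx) hd
    rw [dist_eq_norm] at this
    exact this.le
  have hxmem : x ∈ Metric.closedBall x δ := Metric.mem_closedBall_self hδpos.le
  have hymem : x + z ∈ Metric.closedBall x δ := by
    rw [Metric.mem_closedBall, dist_eq_norm, add_sub_cancel_left]; exact hz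
  have := Convex.norm_image_sub_le_of_norm_hasFDerivWithin_le' hdiff hbound
    (convex_closedBall x δ) hxmem hymem
  simpa using this

set_option synthInstance.maxHeartbeats 1000000
set_option maxHeartbeats 2000000

/-- the differential operator `O(q,p) = (q̇ − X_Q(q,p), ṗ − X_P(q,p))`,
acting on pairs of C¹ curves on `[a,b]` (with the C¹ norm) with values in pairs of
continuous curves with the supremum norm, is Fréchet differentiable at any point
`(q,p)`, with derivative
`DO(q,p)(u,v) = (u̇ − ∂X_Q/∂q u − ∂X_Q/∂p v, v̇ − ∂X_P/∂q u − ∂X_P/∂p v)`,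
i.e. `(u̇ − (DX_Q)(q,p)·(u,v), v̇ − (DX_P)(q,p)·(u,v))`. -/
theorem stmt14 (d : ℕ) (hd : 1 ≤ d) (a b : ℝ) (hab : a < b)
    (XQ XP : ((Fin d → ℝ) × (Fin d → ℝ)) → (Fin d → ℝ))
    (hXQ : ContDiff ℝ 1 XQ) (hXP : ContDiff ℝ 1 XP)
    (QP : ↥(C1Space a b hab.le (Fin d → ℝ)) × ↥(C1Space a b hab.le (Fin d → ℝ)))
    (O : (↥(C1Space a b hab.le (Fin d → ℝ)) × ↥(C1Space a b hab.le (Fin d → ℝ))) →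
      C(Set.Icc a b, Fin d → ℝ) × C(Set.Icc a b, Fin d → ℝ))
    (hO : ∀ uv, ∀ t : Set.Icc a b,
      (O uv).1 t = uv.1.val.2 t - XQ (uv.1.val.1 t, uv.2.val.1 t) ∧
      (O uv).2 t = uv.2.val.2 t - XP (uv.1.val.1 t, uv.2.val.1 t)) :
    ∃ L : (↥(C1Space a b hab.le (Fin d → ℝ)) × ↥(C1Space a b hab.le (Fin d → ℝ))) →L[ℝ]
        (C(Set.Icc a b, Fin d → ℝ) × C(Set.Icc a b, Fin d → ℝ)),
      (∀ uv, ∀ t : Set.Icc a b,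
        (L uv).1 t = uv.1.val.2 t -
          fderiv ℝ XQ (QP.1.val.1 t, QP.2.val.1 t) (uv.1.val.1 t, uv.2.val.1 t) ∧
        (L uv).2 t = uv.2.val.2 t -
          fderiv ℝ XP (QP.1.val.1 t, QP.2.val.1 t) (uv.1.val.1 t, uv.2.val.1 t)) ∧
      HasFDerivAt O L QP := by
  set Q : C(Set.Icc a b, Fin d → ℝ) := QP.1.val.1 with hQdef
  set P : C(Set.Icc a b, Fin d → ℝ) := QP.2.val.1 with hPdef
  set gQ : C(Set.Icc a b, ((Fin d → ℝ) × (Fin d → ℝ)) →L[ℝ] (Fin d → ℝ)) :=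
    ⟨fun t => fderiv ℝ XQ (Q t, P t),
      by exact (hXQ.continuous_fderiv one_ne_zero).comp (Q.continuous.prodMk P.continuous)⟩ with hgQdef
  set gP : C(Set.Icc a b, ((Fin d → ℝ) × (Fin d → ℝ)) →L[ℝ] (Fin d → ℝ)) :=
    ⟨fun t => fderiv ℝ XP (Q t, P t),
      by exact (hXP.continuous_fderiv one_ne_zero).comp (Q.continuous.prodMk P.continuous)⟩ with hgPdef
  refine ⟨opL a b hab.le gQ gP, fun uv t => ⟨rfl, rfl⟩, ?_⟩
  rw [hasFDerivAt_iff_isLittleO_nhds_zero, Asymptotics.isLittleO_iff]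
  intro c hc
  have hS : IsCompact (Set.range (fun t : Set.Icc a b => (Q t, P t))) :=
    isCompact_range (Q.continuous.prodMk P.continuous)
  obtain ⟨δ1, hδ1, hK1⟩ := key_unif XQ hXQ hS hc
  obtain ⟨δ2, hδ2, hK2⟩ := key_unif XP hXP hS hc
  filter_upwards [Metric.closedBall_mem_nhds
    (0 : ↥(C1Space a b hab.le (Fin d → ℝ)) × ↥(C1Space a b hab.le (Fin d → ℝ))) (lt_min hδ1 hδ2)] with h hh
  rw [mem_closedBall_zero_iff] at hh
  have hu : ∀ t : Set.Icc a b, ‖h.1.val.1 t‖ ≤ ‖h‖ := fun t =>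
    le_trans (ContinuousMap.norm_coe_le_norm _ t)
      (le_trans (norm_fst_le h.1.val) (norm_fst_le h))
  have hv : ∀ t : Set.Icc a b, ‖h.2.val.1 t‖ ≤ ‖h‖ := fun t =>
    le_trans (ContinuousMap.norm_coe_le_norm _ t)
      (le_trans (norm_fst_le h.2.val) (norm_snd_le h))
  have hb : ∀ t : Set.Icc a b, ‖(h.1.val.1 t, h.2.val.1 t)‖ ≤ ‖h‖ := fun t => by
    rw [Prod.norm_def]; exact max_le (hu t) (hv t)
  have hδ1' : ∀ t : Set.Icc a b, ‖(h.1.val.1 t, h.2.val.1 t)‖ ≤ δ1 := fun t =>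
    le_trans (hb t) (le_trans hh (min_le_left _ _))
  have hδ2' : ∀ t : Set.Icc a b, ‖(h.1.val.1 t, h.2.val.1 t)‖ ≤ δ2 := fun t =>
    le_trans (hb t) (le_trans hh (min_le_right _ _))
  rw [Prod.norm_def]
  apply max_le
  · rw [ContinuousMap.norm_le _ (by positivity)]
    intro t
    have heq : (O (QP + h) - O QP - (opL a b hab.le gQ gP) h).1 t =
        -(XQ ((Q t, P t) + (h.1.val.1 t, h.2.val.1 t)) - XQ (Q t, P t) -
          fderiv ℝ XQ (Q t, P t) (h.1.val.1 t, h.2.val.1 t)) := by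
      simp only [Prod.fst_sub, ContinuousMap.sub_apply]
      rw [(hO (QP + h) t).1, (hO QP t).1]
      show _ - _ - (h.1.val.2 t - gQ t (h.1.val.1 t, h.2.val.1 t)) = _
      simp only [Prod.fst_add, Prod.snd_add, Submodule.coe_add, ContinuousMap.add_apply,
        Prod.mk_add_mk, hgQdef, ContinuousMap.coe_mk, hQdef, hPdef]
      abel
    rw [heq, norm_neg]
    calc ‖_‖ ≤ c * ‖(h.1.val.1 t, h.2.val.1 t)‖ :=
          hK1 (Q t, P t) (Set.mem_range_self t) _ (hδ1' t)
      _ ≤ c * ‖h‖ := mul_le_mul_of_nonneg_left (hb t) hc.le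
  · rw [ContinuousMap.norm_le _ (by positivity)]
    intro t
    have heq : (O (QP + h) - O QP - (opL a b hab.le gQ gP) h).2 t =
        -(XP ((Q t, P t) + (h.1.val.1 t, h.2.val.1 t)) - XP (Q t, P t) -
          fderiv ℝ XP (Q t, P t) (h.1.val.1 t, h.2.val.1 t)) := by
      simp only [Prod.snd_sub, ContinuousMap.sub_apply]
      rw [(hO (QP + h) t).2, (hO QP t).2]
      show _ - _ - (h.2.val.2 t - gP t (h.1.val.1 t, h.2.val.1 t)) = _
      simp only [Prod.fst_add, Prod.snd_add, Submodule.coe_add, ContinuousMap.add_apply,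
        Prod.mk_add_mk, hgPdef, ContinuousMap.coe_mk, hQdef, hPdef]
      abel
    rw [heq, norm_neg]
    calc ‖_‖ ≤ c * ‖(h.1.val.1 t, h.2.val.1 t)‖ :=
          hK2 (Q t, P t) (Set.mem_range_self t) _ (hδ2' t)
      _ ≤ c * ‖h‖ := mul_le_mul_of_nonneg_left (hb t) hc.le
end
end
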